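/- arXiv:2111.13200 — 3 statements merged into one kernel-verified Lean document; each statement's English description precedes it below -/
import Mathlib

section
/- Let N ≥ 1 and let κ_N be a kernel on S with κ_N(r,s) ≤ N for all r, s ∈ S. Then for every k ∈ ℕ₀^S with k ≠ 0, (1 − ‖κ_N‖_∞/N)^{|k|²/2} · N^{1−|k|} · τ(k;κ_N) ≤ p_N(k) ≤ N^{1−|k|} · τ(k;κ_N), where ‖κ_N‖_∞ = max_{r,s∈S} κ_N(r,s). -/
open scoped Classical ENNReal
open Filter MeasureTheory

noncomputable section

/-- The set of ordered pairs `(i,j)` of vertices with `i < j`, representing the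
potential edges of a graph on `Fin n`. -/
def upperPairs (n : ℕ) : Finset (Fin n × Fin n) :=
  Finset.univ.filter fun q => q.1 < q.2

/-- The simple graph on `Fin n` determined by a finite set of (ordered) edges. -/
def graphOf {n : ℕ} (E : Finset (Fin n × Fin n)) : SimpleGraph (Fin n) :=
  SimpleGraph.fromRel fun i j => (i, j) ∈ E

/-- `PConn n x p` is the probability that the inhomogeneous random graph `G(n, x, p)`,
with type vector `x` and independent edges where `{i,j}` is present with probability
`p (x i) (x j)`, is connected; written as a finite sum over connected graphs. -/
def PConn {S : Type*} (n : ℕ) (x : Fin n → S) (p : S → S → ℝ) : ℝ :=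
  ∑ E ∈ (upperPairs n).powerset.filter (fun E => (graphOf E).Connected),
    (∏ q ∈ E, p (x q.1) (x q.2)) * ∏ q ∈ upperPairs n \ E, (1 - p (x q.1) (x q.2))

/-- Sum over all spanning trees (connected graphs with `n - 1` edges) on `Fin n` of the
product of the kernel over the edges. -/
def treeWeight {S : Type*} (n : ℕ) (x : Fin n → S) (κ : S → S → ℝ) : ℝ :=
  ∑ E ∈ (upperPairs n).powerset.filter
      (fun E => (graphOf E).Connected ∧ E.card + 1 = n),
    ∏ q ∈ E, κ (x q.1) (x q.2)

/-- A canonical list of types compatible with the multiplicity vector `k`. -/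
def compatList {S : Type*} [Fintype S] (k : S → ℕ) : List S :=
  (∑ s : S, (k s) • ({s} : Multiset S)).toList

lemma compatList_length {S : Type*} [Fintype S] (k : S → ℕ) :
    (compatList k).length = ∑ s : S, k s := by
  simp [compatList]

/-- A canonical type vector compatible with `k`, i.e. with `∑ i δ_{x i} = k`. -/
def compatVec {S : Type*} [Fintype S] (k : S → ℕ) : Fin (∑ s : S, k s) → S :=
  fun i => (compatList k).get (Fin.cast (compatList_length k).symm i)

/-- `tau κ k` is the spanning-tree weight `τ(k; κ)`. -/
def tau {S : Type*} [Fintype S] (κ : S → S → ℝ) (k : S → ℕ) : ℝ :=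
  treeWeight (∑ s : S, k s) (compatVec k) κ

/-- `pN κN N k` is the probability that the inhomogeneous random graph on a vertex set
with type composition `k` and edge probabilities `min 1 (κN/N)` is connected. -/
def pN {S : Type*} [Fintype S] (κN : S → S → ℝ) (N : ℕ) (k : S → ℕ) : ℝ :=
  PConn (∑ s : S, k s) (compatVec k) fun r s => min 1 (κN r s / N)

/-- Extended-real logarithm, with `elog x = -∞` for `x ≤ 0`. -/
def elog (x : ℝ) : EReal := if x ≤ 0 then (⊥ : EReal) else ((Real.log x : ℝ) : EReal)

/-- The nonnegative part of `-log u`, equal to `∞` if `u ≤ 0`. -/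
def negLogPart (u : ℝ) : ℝ≥0∞ := if u ≤ 0 then ⊤ else ENNReal.ofReal (-Real.log u)

/-- The relative-entropy summand `x log (x / d)` with conventions `0 log 0 = 0` and
`x log (x/0) = +∞` for `x ≠ 0`. -/
def entTerm (x d : ℝ) : EReal :=
  if x = 0 then (0 : EReal) else if d ≤ 0 then (⊤ : EReal)
  else ((x * Real.log (x / d) : ℝ) : EReal)

/-- `‖κ‖_∞ = max_{r,s} κ r s`. -/
def kernelSup {S : Type*} [Fintype S] [Nonempty S] (κ : S → S → ℝ) : ℝ :=
  Finset.univ.sup' Finset.univ_nonempty fun r =>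
    Finset.univ.sup' Finset.univ_nonempty fun s => κ r s

/-- `Σ(κ, ν)`, the `ℓ²(ν)`-operator norm of the matrix `(κ r s * ν s)_{r,s}`. -/
def sigmaOp {S : Type*} [Fintype S] (κ : S → S → ℝ) (ν : S → ℝ) : ℝ :=
  sSup { t : ℝ | ∃ f : S → ℝ, (∀ s, 0 ≤ f s) ∧ (∑ r : S, ν r * f r ^ 2) ≤ 1 ∧
    t = Real.sqrt (∑ r : S, ν r * (∑ s : S, κ r s * f s * ν s) ^ 2) }

/-- Irreducibility of the kernel `κ` with respect to `ν`. -/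
def Irred {S : Type*} (κ : S → S → ℝ) (ν : S → ℝ) : Prop :=
  ∀ A : Set S, (∀ r ∈ A, ∀ s, s ∉ A → 0 < ν r → 0 < ν s → κ r s = 0) →
    (∀ r ∈ A, ν r = 0) ∨ (∀ s, s ∉ A → ν s = 0)

/-- The generating series `Γ_r(θ) = ∑_k τ(k) k_r ∏_s θ_s^{k_s}/k_s! ∈ [0,∞]`. -/
def Gamma0 {S : Type*} [Fintype S] (κ : S → S → ℝ) (θ : S → ℝ) (r : S) : ℝ≥0∞ :=
  ∑' k : S → ℕ,
    ENNReal.ofReal (tau κ k * (k r : ℝ) * ∏ s : S, θ s ^ (k s) / (Nat.factorial (k s) : ℝ))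

/-- `χ(κ, θ)`: the infimum over probability vectors `w ≪ θ` of
`∑_r w_r log (w_r / ((κ w)_r θ_r))`. -/
def chiFn {S : Type*} [Fintype S] (κ : S → S → ℝ) (θ : S → ℝ) : EReal :=
  sInf { v : EReal | ∃ w : S → ℝ, (∀ r, 0 ≤ w r) ∧ ((∑ r : S, w r) = 1) ∧
    (∀ r, θ r = 0 → w r = 0) ∧
    v = ∑ r : S, entTerm (w r) ((∑ s : S, κ r s * w s) * θ r) }

/-- `Δ_r(k)`: the sum over directed spanning trees of the support of `k` rooted at `r`
(encoded as parent maps `f`, edges `(f s, s)` directed away from the root) of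
`∏ κ(f s, s) * k (f s)`. -/
def Delta {S : Type*} [Fintype S] [DecidableEq S] (κ : S → S → ℝ) (k : S → ℕ) (r : S) : ℝ :=
  ∑ f ∈ (Finset.univ : Finset (S → S)).filter (fun f =>
      (∀ s, (s = r ∨ k s = 0) → f s = s) ∧
      ∀ s, 0 < k s → s ≠ r → (0 < k (f s) ∧ ∃ n, f^[n] s = r)),
    ∏ s ∈ Finset.univ.filter (fun s => 0 < k s ∧ s ≠ r), (κ (f s) s * (k (f s) : ℝ))

/-- The reference weight `τ(k) ∏_s μ_s^{k_s}/k_s!`. -/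
def rhoMu {S : Type*} [Fintype S] (κ : S → S → ℝ) (μ : S → ℝ) (k : S → ℕ) : ℝ :=
  tau κ k * ∏ s : S, μ s ^ (k s) / (Nat.factorial (k s) : ℝ)

/-- The microscopic rate function `I_Mi`. -/
def IMi {S : Type*} [Fintype S] (κ : S → S → ℝ) (μ : S → ℝ) (lam : (S → ℕ) → ℝ) : EReal :=
  (∑' k : S → ℕ, entTerm (lam k) (rhoMu κ μ k))
  + ((∑' k : S → ℕ, lam k * (((∑ s : S, k s : ℕ) : ℝ) - 1) : ℝ) : EReal)
  + ((((1 : ℝ)/2) * ∑ r : S, ∑ s : S, (∑' k : S → ℕ, lam k * (k r : ℝ)) * κ r s * μ s : ℝ) : EReal)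

/-- The minimizer candidate `λ_k(c) = τ(k) ∏_s (c_s e^{-(κ c)_s})^{k_s}/k_s!`. -/
def lamC {S : Type*} [Fintype S] (κ : S → S → ℝ) (c : S → ℝ) (k : S → ℕ) : ℝ :=
  tau κ k * ∏ s : S, (c s * Real.exp (-(∑ t : S, κ s t * c t))) ^ (k s) / (Nat.factorial (k s) : ℝ)

/-- The mesoscopic rate function `I_Me`. -/
def IMe {S : Type*} [Fintype S] (κ : S → S → ℝ) (μ ν : S → ℝ) : EReal :=
  (∑ r : S, entTerm (ν r) ((∑ s : S, κ r s * ν s) * μ r))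
  + ((((1 : ℝ)/2) * ∑ r : S, ∑ s : S, ν r * κ r s * μ s : ℝ) : EReal)

/-- `b` is a solution of the fixed-point system for `c`:
`b ∈ [0,∞)^S`, `b ≤ c` and `(κ(c-b))_r b_r = c_r - b_r` for all `r`. -/
def IsFPSol {S : Type*} [Fintype S] (κ : S → S → ℝ) (c b : S → ℝ) : Prop :=
  (∀ r, 0 ≤ b r) ∧ (∀ r, b r ≤ c r) ∧
    ∀ r, (∑ s : S, κ r s * (c s - b s)) * b r = c r - b r

/-- The macroscopic rate summand `f_Ma`. -/
def fMa {S : Type*} [Fintype S] (κ : S → S → ℝ) (μ y : S → ℝ) : EReal :=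
  (∑ r : S, entTerm (y r) ((1 - Real.exp (-(∑ s : S, κ r s * y s))) * μ r))
  + ((((1 : ℝ)/2) * ∑ r : S, ∑ s : S, y r * κ r s * (μ s - y s) : ℝ) : EReal)

/-- The functional `G_c(b)`. -/
def Gc {S : Type*} [Fintype S] (κ : S → S → ℝ) (μ c b : S → ℝ) : EReal :=
  (((∑ r : S, b r * Real.log (b r / μ r))
      - (1/2) * ∑ r : S, ∑ s : S, b r * κ r s * b s
      + (1/2) * ∑ r : S, ∑ s : S, c r * κ r s * μ s : ℝ) : EReal)
  + ∑ r : S, entTerm (c r - b r) ((∑ s : S, κ r s * (c s - b s)) * μ r)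

/-- `λ_k(t) = t^{|k|-1} τ(k) e^{-t⟨k,κμ⟩} ∏_r μ_r^{k_r}/k_r!`. -/
def lamT {S : Type*} [Fintype S] (κ : S → S → ℝ) (μ : S → ℝ) (k : S → ℕ) (t : ℝ) : ℝ :=
  t ^ ((∑ s : S, k s) - 1) * tau κ k *
    Real.exp (-t * ∑ r : S, ∑ s : S, (k r : ℝ) * κ r s * μ s) *
    ∏ r : S, μ r ^ (k r) / (Nat.factorial (k r) : ℝ)

lemma upperPairs_lt {n : ℕ} {q : Fin n × Fin n} (h : q ∈ upperPairs n) : q.1 < q.2 := by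
  simpa [upperPairs] using h

lemma graphOf_adj {n : ℕ} {E : Finset (Fin n × Fin n)} {a b : Fin n} :
    (graphOf E).Adj a b ↔ a ≠ b ∧ ((a, b) ∈ E ∨ (b, a) ∈ E) := by
  simp [graphOf, SimpleGraph.fromRel_adj]

lemma reachable_of_walk {V : Type*} {G H : SimpleGraph V}
    (hadj : ∀ a b, G.Adj a b → H.Reachable a b) :
    ∀ {u v : V}, G.Walk u v → H.Reachable u v := by
  intro u v p
  induction p with
  | nil => exact SimpleGraph.Reachable.refl _
  | cons h _ ih => exact (hadj _ _ h).trans ih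

lemma graphOf_erase {n : ℕ} {E : Finset (Fin n × Fin n)} (hE : E ⊆ upperPairs n)
    {e : Fin n × Fin n} (he : e ∈ E) :
    graphOf (E.erase e) = graphOf E \ SimpleGraph.fromEdgeSet {s(e.1, e.2)} := by
  have he12 : e.1 < e.2 := upperPairs_lt (hE he)
  ext a b
  rw [graphOf_adj, SimpleGraph.sdiff_adj, graphOf_adj, SimpleGraph.fromEdgeSet_adj]
  simp only [Set.mem_singleton_iff, Finset.mem_erase, Sym2.eq_iff]
  constructor
  · rintro ⟨hab, ⟨hne, hm⟩ | ⟨hne, hm⟩⟩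
    · refine ⟨⟨hab, Or.inl hm⟩, ?_⟩
      rintro ⟨(⟨rfl, rfl⟩ | ⟨rfl, rfl⟩), -⟩
      · exact hne (Prod.ext rfl rfl)
      · exact absurd ((upperPairs_lt (hE hm)).trans he12) (lt_irrefl _)
    · refine ⟨⟨hab, Or.inr hm⟩, ?_⟩
      rintro ⟨(⟨rfl, rfl⟩ | ⟨rfl, rfl⟩), -⟩
      · exact absurd ((upperPairs_lt (hE hm)).trans he12) (lt_irrefl _)
      · exact hne (Prod.ext rfl rfl)
  · rintro ⟨⟨hab, hm | hm⟩, hns⟩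
    · refine ⟨hab, Or.inl ⟨?_, hm⟩⟩
      rintro rfl
      exact hns ⟨Or.inl ⟨rfl, rfl⟩, hab⟩
    · refine ⟨hab, Or.inr ⟨?_, hm⟩⟩
      rintro rfl
      exact hns ⟨Or.inr ⟨rfl, rfl⟩, hab⟩

lemma graphOf_edgeFinset {n : ℕ} {E : Finset (Fin n × Fin n)} (hE : E ⊆ upperPairs n) :
    (graphOf E).edgeFinset = E.image fun q => s(q.1, q.2) := by
  ext e
  induction e with
  | _ a b =>
    simp only [SimpleGraph.mem_edgeFinset, SimpleGraph.mem_edgeSet, graphOf_adj,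
      Finset.mem_image]
    constructor
    · rintro ⟨hab, h | h⟩
      · exact ⟨(a, b), h, rfl⟩
      · exact ⟨(b, a), h, Sym2.eq_swap⟩
    · rintro ⟨q, hq, hs⟩
      have hlt : q.1 < q.2 := upperPairs_lt (hE hq)
      rcases Sym2.eq_iff.mp hs with ⟨h1, h2⟩ | ⟨h1, h2⟩
      · subst h1; subst h2; exact ⟨hlt.ne, Or.inl hq⟩
      · subst h1; subst h2; exact ⟨hlt.ne', Or.inr hq⟩

lemma graphOf_edgeFinset_card {n : ℕ} {E : Finset (Fin n × Fin n)} (hE : E ⊆ upperPairs n) :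
    (graphOf E).edgeFinset.card = E.card := by
  rw [graphOf_edgeFinset hE]
  apply Finset.card_image_of_injOn
  intro q hq q' hq' h
  have h1 := upperPairs_lt (hE hq)
  have h2 := upperPairs_lt (hE hq')
  rcases Sym2.eq_iff.mp h with ⟨ha, hb⟩ | ⟨ha, hb⟩
  · exact Prod.ext ha hb
  · exfalso; rw [ha] at h1; rw [← hb] at h2; exact absurd (h1.trans h2) (lt_irrefl _)

lemma erase_connected {n : ℕ} {E : Finset (Fin n × Fin n)}
    (hc : (graphOf E).Connected) {q : Fin n × Fin n}
    (hr : (graphOf (E.erase q)).Reachable q.1 q.2) : (graphOf (E.erase q)).Connected := by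
  have hadj : ∀ a b, (graphOf E).Adj a b → (graphOf (E.erase q)).Reachable a b := by
    intro a b hab
    obtain ⟨hne, hm | hm⟩ := graphOf_adj.mp hab
    · by_cases hq : (a, b) = q
      · subst hq; exact hr
      · exact (graphOf_adj.mpr ⟨hne, Or.inl (Finset.mem_erase.mpr ⟨hq, hm⟩)⟩).reachable
    · by_cases hq : (b, a) = q
      · subst hq; exact hr.symm
      · exact (graphOf_adj.mpr ⟨hne, Or.inr (Finset.mem_erase.mpr ⟨hq, hm⟩)⟩).reachable
  haveI : Nonempty (Fin n) := hc.nonempty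
  refine ⟨fun a b => ?_⟩
  obtain ⟨p⟩ := hc.preconnected a b
  exact reachable_of_walk hadj p

lemma exists_spanning_tree {n : ℕ} :
    ∀ E : Finset (Fin n × Fin n), E ⊆ upperPairs n → (graphOf E).Connected →
      ∃ T, T ⊆ E ∧ (graphOf T).Connected ∧ T.card + 1 = n := by
  intro E
  induction E using Finset.strongInduction with
  | _ E ih =>
    intro hE hc
    by_cases h : ∃ e ∈ E, (graphOf (E.erase e)).Connected
    · obtain ⟨e, he, hce⟩ := h
      obtain ⟨T, hTE, hTc, hTcard⟩ := ih (E.erase e) (Finset.erase_ssubset he)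
        ((Finset.erase_subset _ _).trans hE) hce
      exact ⟨T, hTE.trans (Finset.erase_subset _ _), hTc, hTcard⟩
    · push_neg at h
      have hac : (graphOf E).IsAcyclic := by
        rw [SimpleGraph.isAcyclic_iff_forall_adj_isBridge]
        intro v w hvw
        rw [SimpleGraph.isBridge_iff]
        rw [SimpleGraph.deleteEdges]
        obtain ⟨hne, hm | hm⟩ := graphOf_adj.mp hvw
        · rw [show s(v, w) = s(((v, w) : Fin n × Fin n).1, ((v, w) : Fin n × Fin n).2) from rfl,
            ← graphOf_erase hE hm]
          intro hr
          exact h (v, w) hm (erase_connected hc hr)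
        · rw [Sym2.eq_swap,
            show s(w, v) = s(((w, v) : Fin n × Fin n).1, ((w, v) : Fin n × Fin n).2) from rfl,
            ← graphOf_erase hE hm]
          intro hr
          exact h (w, v) hm (erase_connected hc hr.symm)
      have htree : (graphOf E).IsTree := ⟨hc, hac⟩
      have hcard := htree.card_edgeFinset
      rw [graphOf_edgeFinset_card hE, Fintype.card_fin] at hcard
      exact ⟨E, Finset.Subset.refl E, hc, hcard⟩

lemma sum_superset_prod {α : Type*} [DecidableEq α] (U T : Finset α) (hT : T ⊆ U)
    (f g : α → ℝ) :
    ∑ E ∈ U.powerset.filter (fun E => T ⊆ E),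
        (∏ q ∈ E, f q) * ∏ q ∈ U \ E, g q
      = (∏ q ∈ T, f q) * ∏ q ∈ U \ T, (f q + g q) := by
  rw [Finset.prod_add, Finset.mul_sum]
  refine Finset.sum_nbij' (fun E => E \ T) (fun F => T ∪ F) ?_ ?_ ?_ ?_ ?_
  · intro E hE
    simp only [Finset.mem_filter, Finset.mem_powerset] at hE ⊢
    exact Finset.sdiff_subset_sdiff hE.1 (Finset.Subset.refl T)
  · intro F hF
    simp only [Finset.mem_powerset] at hF
    simp only [Finset.mem_filter, Finset.mem_powerset]
    exact ⟨Finset.union_subset hT (hF.trans (Finset.sdiff_subset)), Finset.subset_union_left⟩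
  · intro E hE
    simp only [Finset.mem_filter, Finset.mem_powerset] at hE
    exact Finset.union_sdiff_of_subset hE.2
  · intro F hF
    simp only [Finset.mem_powerset] at hF
    refine Finset.union_sdiff_cancel_left ?_
    exact Finset.disjoint_of_subset_right hF Finset.disjoint_sdiff
  · intro E hE
    simp only [Finset.mem_filter, Finset.mem_powerset] at hE
    obtain ⟨hEU, hTE⟩ := hE
    have h1 : (∏ q ∈ E, f q) = (∏ q ∈ E \ T, f q) * ∏ q ∈ T, f q :=
      (Finset.prod_sdiff hTE).symm
    have h2 : U \ E = (U \ T) \ (E \ T) := by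
      ext a
      simp only [Finset.mem_sdiff]
      constructor
      · intro ⟨ha, hb⟩; exact ⟨⟨ha, fun h => hb (hTE h)⟩, fun h => hb h.1⟩
      · intro ⟨⟨ha, hb⟩, hcd⟩
        refine ⟨ha, fun h => hcd ⟨h, hb⟩⟩
    rw [h1, h2]; ring

lemma PConn_le_treeSum {S : Type*} (n : ℕ) (x : Fin n → S) (p : S → S → ℝ)
    (h0 : ∀ r s, 0 ≤ p r s) (h1 : ∀ r s, p r s ≤ 1) :
    PConn n x p ≤ ∑ T ∈ (upperPairs n).powerset.filter
        (fun E => (graphOf E).Connected ∧ E.card + 1 = n),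
      ∏ q ∈ T, p (x q.1) (x q.2) := by
  classical
  set U := upperPairs n with hU
  set w : Finset (Fin n × Fin n) → ℝ := fun E =>
    (∏ q ∈ E, p (x q.1) (x q.2)) * ∏ q ∈ U \ E, (1 - p (x q.1) (x q.2)) with hw
  set C := U.powerset.filter (fun E => (graphOf E).Connected) with hC
  set Tr := U.powerset.filter
      (fun E => (graphOf E).Connected ∧ E.card + 1 = n) with hTr
  have hwnn : ∀ E, 0 ≤ w E := by
    intro E
    refine mul_nonneg (Finset.prod_nonneg fun q _ => h0 _ _)
      (Finset.prod_nonneg fun q _ => by linarith [h1 (x q.1) (x q.2)])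
  have hst : ∀ E ∈ C, ∃ T, T ⊆ E ∧ (graphOf T).Connected ∧ T.card + 1 = n := by
    intro E hE
    simp only [hC, Finset.mem_filter, Finset.mem_powerset] at hE
    exact exists_spanning_tree E hE.1 hE.2
  set σ : Finset (Fin n × Fin n) → Finset (Fin n × Fin n) := fun E =>
    if h : E ∈ C then (hst E h).choose else ∅ with hσ
  have hσ_spec : ∀ E ∈ C, σ E ⊆ E ∧ (graphOf (σ E)).Connected ∧ (σ E).card + 1 = n := by
    intro E hE
    simp only [hσ, dif_pos hE]
    exact (hst E hE).choose_spec
  have hmaps : ∀ E ∈ C, σ E ∈ Tr := by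
    intro E hE
    obtain ⟨h1', h2', h3'⟩ := hσ_spec E hE
    simp only [hTr, Finset.mem_filter, Finset.mem_powerset]
    have hEU : E ⊆ U := by
      simp only [hC, Finset.mem_filter, Finset.mem_powerset] at hE
      exact hE.1
    exact ⟨h1'.trans hEU, h2', h3'⟩
  have hPConn : PConn n x p = ∑ E ∈ C, w E := rfl
  rw [hPConn, ← Finset.sum_fiberwise_of_maps_to hmaps]
  refine Finset.sum_le_sum fun T hT => ?_
  have hTU : T ⊆ U := by
    simp only [hTr, Finset.mem_filter, Finset.mem_powerset] at hT
    exact hT.1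
  calc ∑ E ∈ C.filter (fun E => σ E = T), w E
      ≤ ∑ E ∈ U.powerset.filter (fun E => T ⊆ E), w E := by
        refine Finset.sum_le_sum_of_subset_of_nonneg ?_ (fun E _ _ => hwnn E)
        intro E hE
        simp only [Finset.mem_filter] at hE
        obtain ⟨hEC, hσE⟩ := hE
        simp only [Finset.mem_filter, Finset.mem_powerset]
        constructor
        · simp only [hC, Finset.mem_filter, Finset.mem_powerset] at hEC
          exact hEC.1
        · rw [← hσE]; exact (hσ_spec E hEC).1
    _ = (∏ q ∈ T, p (x q.1) (x q.2)) *
          ∏ q ∈ U \ T, (p (x q.1) (x q.2) + (1 - p (x q.1) (x q.2))) :=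
        sum_superset_prod U T hTU _ _
    _ = ∏ q ∈ T, p (x q.1) (x q.2) := by
        rw [Finset.prod_congr rfl (fun q _ => by ring : ∀ q ∈ U \ T,
          (p (x q.1) (x q.2) + (1 - p (x q.1) (x q.2))) = 1)]
        simp

lemma treeSumLower_le_PConn {S : Type*} (n : ℕ) (x : Fin n → S) (p : S → S → ℝ)
    (h0 : ∀ r s, 0 ≤ p r s) (h1 : ∀ r s, p r s ≤ 1) :
    ∑ T ∈ (upperPairs n).powerset.filter
        (fun E => (graphOf E).Connected ∧ E.card + 1 = n),
      ((∏ q ∈ T, p (x q.1) (x q.2)) * ∏ q ∈ upperPairs n \ T, (1 - p (x q.1) (x q.2)))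
      ≤ PConn n x p := by
  refine Finset.sum_le_sum_of_subset_of_nonneg ?_ ?_
  · intro T hT
    simp only [Finset.mem_filter, Finset.mem_powerset] at hT ⊢
    exact ⟨hT.1, hT.2.1⟩
  · intro E _ _
    refine mul_nonneg (Finset.prod_nonneg fun q _ => h0 _ _)
      (Finset.prod_nonneg fun q _ => by linarith [h1 (x q.1) (x q.2)])

lemma two_mul_card_upperPairs_le (n : ℕ) : 2 * (upperPairs n).card ≤ n ^ 2 := by
  set A := upperPairs n with hA
  set B := (Finset.univ : Finset (Fin n × Fin n)).filter (fun q => q.2 < q.1) with hB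
  have hcard : A.card = B.card := by
    refine Finset.card_bij (fun q _ => (q.2, q.1)) ?_ ?_ ?_
    · intro q hq
      simp only [hB, Finset.mem_filter, Finset.mem_univ, true_and]
      exact upperPairs_lt hq
    · intro q hq q' hq' h
      obtain ⟨h1, h2⟩ := Prod.ext_iff.mp h
      exact Prod.ext h2 h1
    · intro q hq
      simp only [hB, Finset.mem_filter, Finset.mem_univ, true_and] at hq
      refine ⟨(q.2, q.1), ?_, ?_⟩
      · simp only [hA, upperPairs, Finset.mem_filter, Finset.mem_univ, true_and]
        exact hq
      · exact Prod.ext rfl rfl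
  have hdisj : Disjoint A B := by
    rw [Finset.disjoint_left]
    intro q hq hq'
    have h1 := upperPairs_lt hq
    simp only [hB, Finset.mem_filter] at hq'
    exact absurd (h1.trans hq'.2) (lt_irrefl _)
  have hun : A.card + B.card ≤ n * n := by
    rw [← Finset.card_union_of_disjoint hdisj]
    calc (A ∪ B).card ≤ (Finset.univ : Finset (Fin n × Fin n)).card :=
          Finset.card_le_card (Finset.subset_univ _)
      _ = n * n := by simp [Finset.card_univ]
  have hsq : n ^ 2 = n * n := by ring
  omega

lemma le_kernelSup {S : Type*} [Fintype S] [Nonempty S] (κ : S → S → ℝ) (r s : S) :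
    κ r s ≤ kernelSup κ := by
  refine le_trans (Finset.le_sup' (fun s => κ r s) (Finset.mem_univ s)) ?_
  exact Finset.le_sup' (fun r => Finset.univ.sup' Finset.univ_nonempty fun s => κ r s)
    (Finset.mem_univ r)

lemma main_bounds_gen {S : Type*} [Fintype S] [Nonempty S]
    (N : ℕ) (hN : 1 ≤ N) (κN : S → S → ℝ)
    (hκN0 : ∀ r s, 0 ≤ κN r s) (hκNle : ∀ r s, κN r s ≤ N)
    (n : ℕ) (hn : 1 ≤ n) (x : Fin n → S) :
    (1 - kernelSup κN / N) ^ (((n : ℝ)) ^ 2 / 2) *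
        ((N : ℝ) ^ (1 - (n : ℤ)) * treeWeight n x κN)
      ≤ PConn n x (fun r s => min 1 (κN r s / N)) ∧
    PConn n x (fun r s => min 1 (κN r s / N))
      ≤ (N : ℝ) ^ (1 - (n : ℤ)) * treeWeight n x κN := by
  classical
  have hNpos : (0 : ℝ) < N := by exact_mod_cast hN
  have hp : (fun r s => min 1 (κN r s / N)) = fun r s => κN r s / N := by
    funext r s
    exact min_eq_right ((div_le_one hNpos).mpr (hκNle r s))
  have h0' : ∀ r s, 0 ≤ κN r s / N := fun r s => div_nonneg (hκN0 r s) hNpos.le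
  have h1' : ∀ r s, κN r s / N ≤ 1 := fun r s => (div_le_one hNpos).mpr (hκNle r s)
  set Tr := (upperPairs n).powerset.filter
      (fun E => (graphOf E).Connected ∧ E.card + 1 = n) with hTr
  have hzpow : (N : ℝ) ^ (1 - (n : ℤ)) = ((N : ℝ) ^ (n - 1 : ℕ))⁻¹ := by
    have h : (1 - (n : ℤ)) = -((n - 1 : ℕ) : ℤ) := by omega
    rw [h, zpow_neg, zpow_natCast]
  have hsum : ∑ T ∈ Tr, ∏ q ∈ T, (κN (x q.1) (x q.2) / N)
      = (N : ℝ) ^ (1 - (n : ℤ)) * treeWeight n x κN := by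
    have hterm : ∀ T ∈ Tr, ∏ q ∈ T, (κN (x q.1) (x q.2) / N)
        = (∏ q ∈ T, κN (x q.1) (x q.2)) * ((N : ℝ) ^ (n - 1 : ℕ))⁻¹ := by
      intro T hT
      simp only [hTr, Finset.mem_filter, Finset.mem_powerset] at hT
      have hTcard : T.card = n - 1 := by omega
      simp only [div_eq_mul_inv, Finset.prod_mul_distrib, Finset.prod_const, hTcard, inv_pow]
    rw [Finset.sum_congr rfl hterm, ← Finset.sum_mul, hzpow, mul_comm]
    rfl
  have hsup_le : kernelSup κN ≤ N :=
    Finset.sup'_le _ _ fun r _ => Finset.sup'_le _ _ fun s _ => hκNle r s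
  have hsup0 : 0 ≤ kernelSup κN := by
    obtain r0 := Classical.arbitrary S
    exact le_trans (hκN0 r0 r0) (le_kernelSup κN r0 r0)
  set c := 1 - kernelSup κN / N with hc
  have hc0 : 0 ≤ c := by
    rw [hc]
    have : kernelSup κN / N ≤ 1 := (div_le_one hNpos).mpr hsup_le
    linarith
  have hc1 : c ≤ 1 := by
    rw [hc]
    have : 0 ≤ kernelSup κN / N := div_nonneg hsup0 hNpos.le
    linarith
  constructor
  · -- lower bound
    by_cases hcz : c = 0
    · rw [hcz, Real.zero_rpow (by positivity : ((n : ℝ)) ^ 2 / 2 ≠ 0), zero_mul]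
      -- 0 ≤ PConn
      rw [hp]
      refine Finset.sum_nonneg fun E _ => ?_
      refine mul_nonneg (Finset.prod_nonneg fun q _ => h0' _ _)
        (Finset.prod_nonneg fun q _ => by linarith [h1' (x q.1) (x q.2)])
    · have hcpos : 0 < c := lt_of_le_of_ne hc0 (Ne.symm hcz)
      have key : ∀ T ∈ Tr,
          (∏ q ∈ T, (κN (x q.1) (x q.2) / N)) * c ^ (((n : ℝ)) ^ 2 / 2)
            ≤ (∏ q ∈ T, (κN (x q.1) (x q.2) / N)) *
              ∏ q ∈ upperPairs n \ T, (1 - κN (x q.1) (x q.2) / N) := by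
        intro T hT
        refine mul_le_mul_of_nonneg_left ?_ (Finset.prod_nonneg fun q _ => h0' _ _)
        have hm : ((upperPairs n \ T).card : ℝ) ≤ ((n : ℝ)) ^ 2 / 2 := by
          rw [le_div_iff₀ (by norm_num : (0:ℝ) < 2)]
          have h1 : (upperPairs n \ T).card ≤ (upperPairs n).card :=
            Finset.card_le_card (Finset.sdiff_subset)
          have h2 := two_mul_card_upperPairs_le n
          have h3 : (upperPairs n \ T).card * 2 ≤ n ^ 2 := by omega
          exact_mod_cast h3
        calc c ^ (((n : ℝ)) ^ 2 / 2)
            ≤ c ^ (((upperPairs n \ T).card : ℕ) : ℝ) :=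
              Real.rpow_le_rpow_of_exponent_ge hcpos hc1 hm
          _ = c ^ ((upperPairs n \ T).card : ℕ) := Real.rpow_natCast c _
          _ ≤ ∏ q ∈ upperPairs n \ T, (1 - κN (x q.1) (x q.2) / N) := by
              rw [← Finset.prod_const]
              refine Finset.prod_le_prod (fun q _ => hc0) (fun q _ => ?_)
              rw [hc]
              have hdd : κN (x q.1) (x q.2) / N ≤ kernelSup κN / N := by
                gcongr
                exact le_kernelSup κN _ _
              linarith
      calc c ^ (((n : ℝ)) ^ 2 / 2) * ((N : ℝ) ^ (1 - (n : ℤ)) * treeWeight n x κN)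
          = ∑ T ∈ Tr, (∏ q ∈ T, (κN (x q.1) (x q.2) / N)) * c ^ (((n : ℝ)) ^ 2 / 2) := by
            rw [← hsum, mul_comm, Finset.sum_mul]
        _ ≤ ∑ T ∈ Tr, (∏ q ∈ T, (κN (x q.1) (x q.2) / N)) *
              ∏ q ∈ upperPairs n \ T, (1 - κN (x q.1) (x q.2) / N) :=
            Finset.sum_le_sum key
        _ ≤ PConn n x (fun r s => κN r s / N) :=
            treeSumLower_le_PConn n x _ h0' h1'
        _ = PConn n x (fun r s => min 1 (κN r s / N)) := by rw [hp]
  · rw [hp, ← hsum]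
    exact PConn_le_treeSum n x _ h0' h1'

/-- two-sided bounds for the connection probability of microscopic clusters. -/
theorem microscopic_connProb_bounds
    {S : Type*} [Fintype S] [DecidableEq S] [Nonempty S]
    (N : ℕ) (hN : 1 ≤ N)
    (κN : S → S → ℝ) (hκNsym : ∀ r s, κN r s = κN s r)
    (hκN0 : ∀ r s, 0 ≤ κN r s) (hκNle : ∀ r s, κN r s ≤ N)
    (k : S → ℕ) (hk : k ≠ 0) :
    (1 - kernelSup κN / N) ^ ((((∑ s : S, k s : ℕ) : ℝ)) ^ 2 / 2) *
        ((N : ℝ) ^ (1 - ((∑ s : S, k s : ℕ) : ℤ)) * tau κN k) ≤ pN κN N k ∧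
      pN κN N k ≤ (N : ℝ) ^ (1 - ((∑ s : S, k s : ℕ) : ℤ)) * tau κN k := by
  have hn : 1 ≤ ∑ s : S, k s := by
    by_contra h
    push_neg at h
    have h0 : ∑ s : S, k s = 0 := by omega
    rw [Finset.sum_eq_zero_iff] at h0
    exact hk (funext fun s => h0 s (Finset.mem_univ s))
  exact main_bounds_gen N hN κN hκN0 hκNle (∑ s : S, k s) hn (compatVec k)


end
end

section
/- Let N ≥ 1 and let κ_N be a kernel on S with κ_N(r,s) ≤ N for all r, s ∈ S. Fix r ∈ S, k ∈ ℕ₀^S with k_r ≥ 1, and m ∈ ℕ₀^S with k ≤ m componentwise. Then p_N(k) · ∏_{s∈S} C(m_s − δ_{r,s}, k_s − δ_{r,s}) · ∏_{s,s̃ ∈ S} (1 − κ_N(s,s̃)/N)^{k_s (m_{s̃} − k_{s̃})} ≤ 1, where δ_{r,s} is the Kronecker delta and C(·,·) denotes the binomial coefficient. -/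
open scoped Classical ENNReal
open Filter MeasureTheory

noncomputable section

namespace ClusterAux
open Finset

lemma compatVec_fiber {S : Type*} [Fintype S] [DecidableEq S] (k : S → ℕ) (s : S) :
    (Finset.univ.filter (fun i => compatVec k i = s)).card = k s := by
  have hmap : Multiset.map (compatVec k) Finset.univ.val = (compatList k : Multiset S) := by
    rw [Fin.univ_val_map]
    have haux : ∀ (l : List S) (n : ℕ) (h : l.length = n),
        List.ofFn (fun i : Fin n => l.get (Fin.cast h.symm i)) = l := by
      intro l n h; subst h; simpa using List.ofFn_get l
    exact_mod_cast congrArg _ (haux _ _ (compatList_length k))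
  have hcount : Multiset.count s ((compatList k : Multiset S)) = k s := by
    have : ((compatList k : Multiset S)) = ∑ t : S, (k t) • ({t} : Multiset S) := by
      simp [compatList]
    rw [this]
    simp [Multiset.count_sum', Multiset.count_singleton]
  rw [← hmap, Multiset.count_map] at hcount
  rw [← hcount, Finset.card_def, Finset.filter_val]
  exact congrArg _ (Multiset.filter_congr (fun x _ => eq_comm))

lemma mem_upperPairs {n : ℕ} {q : Fin n × Fin n} : q ∈ upperPairs n ↔ q.1 < q.2 := by
  simp [upperPairs]

def sp {M : ℕ} (q : Fin M × Fin M) : Fin M × Fin M := if q.1 < q.2 then q else q.swap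

lemma sp_cases {M : ℕ} (q : Fin M × Fin M) : sp q = q ∨ sp q = q.swap := by
  unfold sp; split <;> simp

lemma sp_mem {M : ℕ} {q : Fin M × Fin M} (h : q.1 ≠ q.2) : sp q ∈ upperPairs M := by
  unfold sp
  rcases lt_or_gt_of_ne h with h1 | h1
  · simp [mem_upperPairs, h1]
  · simp [mem_upperPairs, not_lt_of_gt h1, h1]

lemma sp_eq {M : ℕ} {a b c d : Fin M} (hab : a ≠ b) (h : sp (a, b) = sp (c, d)) :
    (a = c ∧ b = d) ∨ (a = d ∧ b = c) := by
  unfold sp at h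
  split_ifs at h <;> simp_all [Prod.ext_iff, Prod.swap] <;> tauto

def emap {n M : ℕ} (e : Fin n → Fin M) (q : Fin n × Fin n) : Fin M × Fin M :=
  sp (e q.1, e q.2)

lemma emap_injOn {n M : ℕ} {e : Fin n → Fin M} (he : Function.Injective e) :
    Set.InjOn (emap e) (upperPairs n) := by
  intro q hq q' hq' h
  rw [Finset.mem_coe, mem_upperPairs] at hq hq'
  have hne : e q.1 ≠ e q.2 := fun hc => absurd (he hc) (ne_of_lt hq)
  rcases sp_eq hne h with ⟨h1, h2⟩ | ⟨h1, h2⟩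
  · exact Prod.ext (he h1) (he h2)
  · exact absurd (lt_trans (he h1 ▸ hq) (he h2 ▸ hq')) (lt_irrefl _)

def inP {M : ℕ} (A : Finset (Fin M)) : Finset (Fin M × Fin M) :=
  (upperPairs M).filter fun q => q.1 ∈ A ∧ q.2 ∈ A

def crossP {M : ℕ} (A : Finset (Fin M)) : Finset (Fin M × Fin M) :=
  (upperPairs M).filter fun q => (q.1 ∈ A ∧ q.2 ∉ A) ∨ (q.1 ∉ A ∧ q.2 ∈ A)

def outP {M : ℕ} (A : Finset (Fin M)) : Finset (Fin M × Fin M) :=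
  (upperPairs M).filter fun q => q.1 ∉ A ∧ q.2 ∉ A

lemma emap_image {n M : ℕ} {e : Fin n → Fin M} (he : Function.Injective e)
    {A : Finset (Fin M)} (hA : ∀ v, v ∈ A ↔ ∃ i, e i = v) :
    (upperPairs n).image (emap e) = inP A := by
  ext q
  simp only [mem_image, inP, mem_filter]
  constructor
  · rintro ⟨q', hq', rfl⟩
    rw [mem_upperPairs] at hq'
    have hne : e q'.1 ≠ e q'.2 := fun hc => absurd (he hc) (ne_of_lt hq')
    refine ⟨sp_mem hne, ?_⟩
    rcases sp_cases (e q'.1, e q'.2) with h | h <;> rw [emap, h] <;>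
      exact ⟨(hA _).2 ⟨_, rfl⟩, (hA _).2 ⟨_, rfl⟩⟩
  · rintro ⟨hq, h1, h2⟩
    obtain ⟨i, hi⟩ := (hA _).1 h1
    obtain ⟨j, hj⟩ := (hA _).1 h2
    rw [mem_upperPairs] at hq
    have hij : i ≠ j := by rintro rfl; rw [hi] at hj; exact absurd hj (ne_of_lt hq)
    rcases lt_or_gt_of_ne hij with hlt | hlt
    · refine ⟨(i, j), mem_upperPairs.2 hlt, ?_⟩
      rw [emap]; show sp (e i, e j) = q
      rw [hi, hj, sp, if_pos hq]
    · refine ⟨(j, i), mem_upperPairs.2 hlt, ?_⟩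
      rw [emap]; show sp (e j, e i) = q
      rw [hi, hj, sp, if_neg (not_lt_of_gt hq)]; rfl

lemma image_sdiff_injOn {α β : Type*} [DecidableEq α] [DecidableEq β] {f : α → β}
    {s t : Finset α} (h : Set.InjOn f s) (hts : t ⊆ s) :
    (s \ t).image f = s.image f \ t.image f := by
  ext b
  simp only [Finset.mem_image, Finset.mem_sdiff]
  constructor
  · rintro ⟨a, ha, rfl⟩
    obtain ⟨ha1, ha2⟩ := ha
    exact ⟨⟨a, ha1, rfl⟩, fun ⟨a', ha', hfa⟩ => ha2 (h (hts ha') ha1 hfa ▸ ha')⟩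
  · rintro ⟨⟨a, ha, rfl⟩, hb⟩
    exact ⟨a, ⟨ha, fun hc => hb ⟨a, hc, rfl⟩⟩, rfl⟩

lemma image_cancel_injOn {α β : Type*} [DecidableEq α] [DecidableEq β] {f : α → β}
    {s E E' : Finset α} (h : Set.InjOn f s) (hE : E ⊆ s) (hE' : E' ⊆ s)
    (heq : E.image f = E'.image f) : E = E' := by
  ext a
  constructor
  · intro ha
    have : f a ∈ E'.image f := heq ▸ mem_image_of_mem f ha
    obtain ⟨a', ha', hfa⟩ := mem_image.1 this
    exact h (hE' ha') (hE ha) hfa ▸ ha'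
  · intro ha
    have : f a ∈ E.image f := heq.symm ▸ mem_image_of_mem f ha
    obtain ⟨a', ha', hfa⟩ := mem_image.1 this
    exact h (hE ha') (hE' ha) hfa ▸ ha'


lemma sum_weight_one {ι : Type*} [DecidableEq ι] (T : Finset ι) (f : ι → ℝ) :
    ∑ F ∈ T.powerset, (∏ q ∈ F, f q) * ∏ q ∈ T \ F, (1 - f q) = 1 := by
  rw [← Finset.prod_add]; simp

lemma prod_comp_fiber {ι S : Type*} [Fintype S] [DecidableEq S] (B : Finset ι)
    (f : ι → S) (h : S → ℝ) :
    ∏ j ∈ B, h (f j) = ∏ t : S, h t ^ ((B.filter (fun j => f j = t)).card) := by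
  rw [← Finset.prod_fiberwise_of_maps_to (fun x _ => Finset.mem_univ (f x))
    (fun j => h (f j))]
  refine Finset.prod_congr rfl fun t _ => ?_
  rw [Finset.prod_congr rfl (fun j hj => by rw [(Finset.mem_filter.1 hj).2] : 
    ∀ j ∈ B.filter (fun j => f j = t), h (f j) = h t), Finset.prod_const]

lemma cross_prod {S : Type*} [Fintype S] [DecidableEq S] {M : ℕ}
    (p : S → S → ℝ) (hpsym : ∀ a b, p a b = p b a)
    (y : Fin M → S) (A : Finset (Fin M)) (k m : S → ℕ)
    (hy : ∀ s, (Finset.univ.filter (fun i => y i = s)).card = m s)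
    (hAf : ∀ s, (A.filter (fun i => y i = s)).card = k s) :
    ∏ q ∈ crossP A, (1 - p (y q.1) (y q.2))
      = ∏ s : S, ∏ t : S, (1 - p s t) ^ (k s * (m t - k t)) := by
  have step1 : ∏ q ∈ crossP A, (1 - p (y q.1) (y q.2))
      = ∏ q ∈ A ×ˢ (Finset.univ \ A), (1 - p (y q.1) (y q.2)) := by
    refine (Finset.prod_bij' (fun q _ => sp q) (fun q _ => if q.1 ∈ A then q else q.swap)
      ?_ ?_ ?_ ?_ ?_).symm
    · -- maps A ×ˢ (univ \ A) → crossP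
      intro q hq
      rw [Finset.mem_product, Finset.mem_sdiff] at hq
      obtain ⟨h1, _, h2⟩ := hq
      have hne : q.1 ≠ q.2 := fun hc => h2 (hc ▸ h1)
      refine Finset.mem_filter.2 ⟨sp_mem hne, ?_⟩
      rcases sp_cases q with h | h <;> rw [h] <;> simp [h1, h2]
    · -- maps crossP → A ×ˢ (univ \ A)
      intro q hq
      obtain ⟨_, hx⟩ := Finset.mem_filter.1 hq
      rcases hx with ⟨h1, h2⟩ | ⟨h1, h2⟩
      · simp [h1, h2]
      · simp [h1, h2]
    · -- left inverse
      intro q hq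
      rw [Finset.mem_product, Finset.mem_sdiff] at hq
      obtain ⟨h1, _, h2⟩ := hq
      rcases sp_cases q with h | h <;> rw [h]
      · simp [h1]
      · simp [h2]
    · -- right inverse
      intro q hq
      obtain ⟨hup, _⟩ := Finset.mem_filter.1 hq
      rw [mem_upperPairs] at hup
      unfold sp
      split_ifs
      all_goals first
        | rfl
        | exact Prod.swap_swap q
        | exact absurd hup (by assumption)
        | exact absurd hup (asymm (by simpa using ‹q.swap.1 < q.swap.2›))
    · intro q hq
      rcases sp_cases q with h | h <;> rw [h]
      simp only [Prod.fst_swap, Prod.snd_swap]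
      rw [hpsym]
  rw [step1, Finset.prod_product]
  have hcompl : ∀ t, ((Finset.univ \ A).filter (fun j => y j = t)).card = m t - k t := by
    intro t
    have : (Finset.univ \ A).filter (fun j => y j = t)
        = Finset.univ.filter (fun j => y j = t) \ A.filter (fun j => y j = t) := by
      ext a; simp only [Finset.mem_filter, Finset.mem_sdiff]; tauto
    rw [this, Finset.card_sdiff_of_subset (Finset.filter_subset_filter _ (Finset.subset_univ A)),
      hy, hAf]
  have inner : ∀ i, ∏ j ∈ Finset.univ \ A, (1 - p (y i) (y j))
      = ∏ t : S, (1 - p (y i) t) ^ (m t - k t) := by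
    intro i
    rw [prod_comp_fiber (Finset.univ \ A) y (fun t => 1 - p (y i) t)]
    exact Finset.prod_congr rfl fun t _ => by rw [hcompl]
  calc ∏ i ∈ A, ∏ j ∈ Finset.univ \ A, (1 - p (y i) (y j))
      = ∏ i ∈ A, ∏ t : S, (1 - p (y i) t) ^ (m t - k t) :=
        Finset.prod_congr rfl fun i _ => inner i
    _ = ∏ s : S, (∏ t : S, (1 - p s t) ^ (m t - k t)) ^ (k s) := by
        rw [prod_comp_fiber A y (fun s => ∏ t : S, (1 - p s t) ^ (m t - k t))]
        exact Finset.prod_congr rfl fun s _ => by rw [hAf]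
    _ = ∏ s : S, ∏ t : S, (1 - p s t) ^ (k s * (m t - k t)) := by
        refine Finset.prod_congr rfl fun s _ => ?_
        rw [← Finset.prod_pow]
        exact Finset.prod_congr rfl fun t _ => by rw [← pow_mul, Nat.mul_comm]


lemma reach_iff {n M : ℕ} (e : Fin n → Fin M) (he : Function.Injective e)
    (A : Finset (Fin M)) (hA : ∀ v, v ∈ A ↔ ∃ i, e i = v)
    (E : Finset (Fin n × Fin n)) (hconn : (graphOf E).Connected)
    (F' : Finset (Fin M × Fin M)) (hF' : ∀ q ∈ F', q.1 ∉ A ∧ q.2 ∉ A)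
    (v0 : Fin M) (hv0 : v0 ∈ A) (j : Fin M) :
    (graphOf (E.image (emap e) ∪ F')).Reachable v0 j ↔ j ∈ A := by
  constructor
  · intro hreach
    have hclosed : ∀ a b : Fin M, a ∈ A → (graphOf (E.image (emap e) ∪ F')).Adj a b → b ∈ A := by
      intro a b ha hadj
      rw [graphOf, SimpleGraph.fromRel_adj] at hadj
      obtain ⟨hne, hor⟩ := hadj
      have key : ∀ c d : Fin M, (c, d) ∈ E.image (emap e) ∪ F' →
          (c ∈ A ∧ d ∈ A) ∨ (c ∉ A ∧ d ∉ A) := by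
        intro c d hcd
        rcases Finset.mem_union.1 hcd with hcd | hcd
        · obtain ⟨q, _, hq⟩ := Finset.mem_image.1 hcd
          left
          rcases sp_cases (e q.1, e q.2) with h | h <;> rw [emap, h] at hq <;>
            (injection hq with h1 h2; subst h1; subst h2) <;>
            exact ⟨(hA _).2 ⟨_, rfl⟩, (hA _).2 ⟨_, rfl⟩⟩
        · right; exact hF' _ hcd
      rcases hor with h | h
      · rcases key a b h with ⟨_, h2⟩ | ⟨h1, _⟩
        · exact h2
        · exact absurd ha h1
      · rcases key b a h with ⟨h2, _⟩ | ⟨_, h1⟩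
        · exact h2
        · exact absurd ha h1
    have key : ∀ (u v : Fin M) (w : (graphOf (E.image (emap e) ∪ F')).Walk u v), u ∈ A → v ∈ A := by
      intro u v w
      induction w with
      | nil => exact id
      | cons h _ ih => exact fun hu => ih (hclosed _ _ hu h)
    obtain ⟨w⟩ := hreach
    exact key _ _ w hv0
  · intro hj
    obtain ⟨i, hi⟩ := (hA j).1 hj
    obtain ⟨i0, hi0⟩ := (hA v0).1 hv0
    have hrel : ∀ {a b : Fin n}, (graphOf E).Adj a b →
        (graphOf (E.image (emap e) ∪ F')).Adj (e a) (e b) := by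
      intro a b hab
      rw [graphOf, SimpleGraph.fromRel_adj] at hab ⊢
      obtain ⟨hne, hor⟩ := hab
      refine ⟨he.ne hne, ?_⟩
      have hmem : ∀ u v : Fin n, (u, v) ∈ E →
          (e u, e v) ∈ E.image (emap e) ∪ F' ∨ (e v, e u) ∈ E.image (emap e) ∪ F' := by
        intro u v huv
        have : emap e (u, v) ∈ E.image (emap e) := Finset.mem_image_of_mem _ huv
        rcases sp_cases (e u, e v) with h | h <;> rw [emap, h] at this
        · exact Or.inl (Finset.mem_union_left _ this)
        · exact Or.inr (Finset.mem_union_left _ this)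
      rcases hor with h | h
      · exact hmem a b h
      · exact (hmem b a h).symm
    have hre := (hconn.preconnected i0 i).map
      (⟨e, fun h => hrel h⟩ : graphOf E →g graphOf (E.image (emap e) ∪ F'))
    rw [show ((⟨e, fun h => hrel h⟩ : graphOf E →g graphOf (E.image (emap e) ∪ F')) i0) = e i0
      from rfl] at hre
    rw [show ((⟨e, fun h => hrel h⟩ : graphOf E →g graphOf (E.image (emap e) ∪ F')) i) = e i
      from rfl] at hre
    rw [hi0, hi] at hre
    exact hre


lemma perA {S : Type*} [Fintype S] [DecidableEq S] {n M : ℕ}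
    (p : S → S → ℝ) (hpsym : ∀ a b, p a b = p b a)
    (y : Fin M → S) (x : Fin n → S) (e : Fin n → Fin M) (he : Function.Injective e)
    (hye : ∀ i, y (e i) = x i) (A : Finset (Fin M)) (hA : ∀ v, v ∈ A ↔ ∃ i, e i = v) :
    ∑ E ∈ (upperPairs n).powerset.filter (fun E => (graphOf E).Connected),
      ∑ F' ∈ (outP A).powerset,
        ((∏ q ∈ E.image (emap e) ∪ F', p (y q.1) (y q.2)) *
          ∏ q ∈ upperPairs M \ (E.image (emap e) ∪ F'), (1 - p (y q.1) (y q.2)))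
      = PConn n x p * ∏ q ∈ crossP A, (1 - p (y q.1) (y q.2)) := by
  have himg := emap_image he hA
  have hinj : Set.InjOn (emap e) (upperPairs n) := emap_injOn he
  have hval : ∀ q : Fin n × Fin n, q ∈ upperPairs n →
      p (y (emap e q).1) (y (emap e q).2) = p (x q.1) (x q.2) := by
    intro q _
    rcases sp_cases (e q.1, e q.2) with h | h <;> rw [emap, h] <;> dsimp
    · rw [hye, hye]
    · rw [hpsym, hye, hye]
  rw [PConn, Finset.sum_mul]
  refine Finset.sum_congr rfl fun E hE => ?_
  obtain ⟨hEsub', _⟩ := Finset.mem_filter.1 hE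
  have hEsub : E ⊆ upperPairs n := Finset.mem_powerset.1 hEsub'
  have hE'I : E.image (emap e) ⊆ inP A := by
    rw [← himg]; exact Finset.image_subset_image hEsub
  have htr1 : ∏ q ∈ E.image (emap e), p (y q.1) (y q.2) = ∏ q ∈ E, p (x q.1) (x q.2) := by
    rw [Finset.prod_image (fun a ha b hb => hinj (hEsub ha) (hEsub hb))]
    exact Finset.prod_congr rfl fun q hq => hval q (hEsub hq)
  have htr2 : ∏ q ∈ inP A \ E.image (emap e), (1 - p (y q.1) (y q.2))
      = ∏ q ∈ upperPairs n \ E, (1 - p (x q.1) (x q.2)) := by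
    rw [← himg, ← image_sdiff_injOn hinj hEsub,
      Finset.prod_image (fun a ha b hb =>
        hinj (Finset.mem_sdiff.1 ha).1 (Finset.mem_sdiff.1 hb).1)]
    exact Finset.prod_congr rfl fun q hq =>
      by rw [hval q (Finset.mem_sdiff.1 hq).1]
  have step : ∀ F' ∈ (outP A).powerset,
      ((∏ q ∈ E.image (emap e) ∪ F', p (y q.1) (y q.2)) *
        ∏ q ∈ upperPairs M \ (E.image (emap e) ∪ F'), (1 - p (y q.1) (y q.2)))
      = ((∏ q ∈ E, p (x q.1) (x q.2)) * ∏ q ∈ upperPairs n \ E, (1 - p (x q.1) (x q.2)))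
        * (∏ q ∈ crossP A, (1 - p (y q.1) (y q.2)))
        * ((∏ q ∈ F', p (y q.1) (y q.2)) * ∏ q ∈ outP A \ F', (1 - p (y q.1) (y q.2))) := by
    intro F' hF'sub
    have hF'O : F' ⊆ outP A := Finset.mem_powerset.1 hF'sub
    have hd1 : Disjoint (E.image (emap e)) F' := by
      rw [Finset.disjoint_left]
      intro q hq hq'
      obtain ⟨_, h1, _⟩ := Finset.mem_filter.1 (hE'I hq)
      obtain ⟨_, h2, _⟩ := Finset.mem_filter.1 (hF'O hq')
      exact h2 h1
    have hsplit : upperPairs M \ (E.image (emap e) ∪ F')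
        = (inP A \ E.image (emap e)) ∪ (crossP A ∪ (outP A \ F')) := by
      ext q
      have h1 : q ∈ E.image (emap e) → q ∈ upperPairs M ∧ q.1 ∈ A ∧ q.2 ∈ A := by
        intro h; exact Finset.mem_filter.1 (hE'I h)
      have h2 : q ∈ F' → q ∈ upperPairs M ∧ q.1 ∉ A ∧ q.2 ∉ A := by
        intro h; exact Finset.mem_filter.1 (hF'O h)
      constructor
      · intro hq
        obtain ⟨hT, hn⟩ := Finset.mem_sdiff.1 hq
        rw [Finset.mem_union] at hn
        push_neg at hn
        obtain ⟨hnE, hnF⟩ := hn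
        rw [Finset.mem_union, Finset.mem_union, Finset.mem_sdiff, Finset.mem_sdiff]
        by_cases ha1 : q.1 ∈ A <;> by_cases ha2 : q.2 ∈ A
        · exact Or.inl ⟨Finset.mem_filter.2 ⟨hT, ha1, ha2⟩, hnE⟩
        · exact Or.inr (Or.inl (Finset.mem_filter.2 ⟨hT, Or.inl ⟨ha1, ha2⟩⟩))
        · exact Or.inr (Or.inl (Finset.mem_filter.2 ⟨hT, Or.inr ⟨ha1, ha2⟩⟩))
        · exact Or.inr (Or.inr ⟨Finset.mem_filter.2 ⟨hT, ha1, ha2⟩, hnF⟩)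
      · intro hq
        rw [Finset.mem_union, Finset.mem_union, Finset.mem_sdiff, Finset.mem_sdiff] at hq
        rw [Finset.mem_sdiff, Finset.mem_union]
        rcases hq with ⟨hI, hnE⟩ | hX | ⟨hO, hnF⟩
        · obtain ⟨hT, ha1, ha2⟩ := Finset.mem_filter.1 hI
          exact ⟨hT, fun h => h.elim hnE (fun h' => (h2 h').2.1 ha1)⟩
        · obtain ⟨hT, hx⟩ := Finset.mem_filter.1 hX
          refine ⟨hT, fun h => h.elim (fun h' => ?_) (fun h' => ?_)⟩
          · obtain ⟨_, hb1, hb2⟩ := h1 h'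
            rcases hx with ⟨_, hc⟩ | ⟨hc, _⟩
            · exact hc hb2
            · exact hc hb1
          · obtain ⟨_, hb1, hb2⟩ := h2 h'
            rcases hx with ⟨hc, _⟩ | ⟨_, hc⟩
            · exact hb1 hc
            · exact hb2 hc
        · obtain ⟨hT, ha1, ha2⟩ := Finset.mem_filter.1 hO
          exact ⟨hT, fun h => h.elim (fun h' => ha1 (h1 h').2.1) hnF⟩
    have hd2 : Disjoint (inP A \ E.image (emap e)) (crossP A ∪ (outP A \ F')) := by
      rw [Finset.disjoint_left]
      intro q hq hq'
      obtain ⟨hqI, _⟩ := Finset.mem_sdiff.1 hq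
      obtain ⟨_, hin1, hin2⟩ := Finset.mem_filter.1 hqI
      rcases Finset.mem_union.1 hq' with h | h
      · obtain ⟨_, hc⟩ := Finset.mem_filter.1 h
        rcases hc with ⟨_, hc2⟩ | ⟨hc1, _⟩
        · exact hc2 hin2
        · exact hc1 hin1
      · obtain ⟨hqO, _⟩ := Finset.mem_sdiff.1 h
        obtain ⟨_, hc1, _⟩ := Finset.mem_filter.1 hqO
        exact hc1 hin1
    have hd3 : Disjoint (crossP A) (outP A \ F') := by
      rw [Finset.disjoint_left]
      intro q hq hq'
      obtain ⟨_, hc⟩ := Finset.mem_filter.1 hq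
      obtain ⟨hqO, _⟩ := Finset.mem_sdiff.1 hq'
      obtain ⟨_, h1, h2⟩ := Finset.mem_filter.1 hqO
      rcases hc with ⟨hc1, _⟩ | ⟨_, hc2⟩
      · exact h1 hc1
      · exact h2 hc2
    rw [Finset.prod_union hd1, hsplit, Finset.prod_union hd2, Finset.prod_union hd3,
      htr1, htr2]
    ring
  rw [Finset.sum_congr rfl step, ← Finset.mul_sum,
    sum_weight_one (outP A) (fun q => p (y q.1) (y q.2)), mul_one]


lemma card_A {S : Type*} [Fintype S] [DecidableEq S] {M : ℕ}
    (y : Fin M → S) (v0 : Fin M) (r : S) (hv0 : y v0 = r)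
    (k m : S → ℕ) (hkr : 1 ≤ k r)
    (hy : ∀ s, (Finset.univ.filter (fun i => y i = s)).card = m s) :
    (Finset.univ.filter (fun A : Finset (Fin M) =>
        v0 ∈ A ∧ ∀ s, (A.filter (fun i => y i = s)).card = k s)).card
      = ∏ s : S, ((m s - if s = r then 1 else 0).choose (k s - if s = r then 1 else 0)) := by
  have hfib : ∀ s, ((Finset.univ.erase v0).filter (fun i => y i = s)).card
      = m s - if s = r then 1 else 0 := by
    intro s
    rw [Finset.filter_erase]
    by_cases hs : s = r
    · rw [Finset.card_erase_of_mem (by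
        rw [Finset.mem_filter]; exact ⟨Finset.mem_univ _, hs ▸ hv0⟩), hy, if_pos hs]
    · rw [Finset.erase_eq_of_notMem (by
        rw [Finset.mem_filter]; rintro ⟨_, h⟩; exact hs (h ▸ hv0 ▸ rfl)), hy, if_neg hs, Nat.sub_zero]
  have htarget : ∏ s : S, ((m s - if s = r then 1 else 0).choose (k s - if s = r then 1 else 0))
      = (Fintype.piFinset (fun s : S =>
          ((Finset.univ.erase v0).filter (fun i => y i = s)).powersetCard
            (k s - if s = r then 1 else 0))).card := by
    rw [Fintype.card_piFinset]
    refine (Finset.prod_congr rfl fun s _ => ?_).symm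
    rw [Finset.card_powersetCard, hfib]
  rw [htarget]
  have hgprop : ∀ g : S → Finset (Fin M), g ∈ Fintype.piFinset (fun s : S =>
      ((Finset.univ.erase v0).filter (fun i => y i = s)).powersetCard
        (k s - if s = r then 1 else 0)) →
      (v0 ∉ Finset.univ.biUnion g) ∧
      (∀ s, (Finset.univ.biUnion g).filter (fun i => y i = s) = g s) := by
    intro g hg
    rw [Fintype.mem_piFinset] at hg
    have hsub : ∀ s, g s ⊆ (Finset.univ.erase v0).filter (fun i => y i = s) :=
      fun s => (Finset.mem_powersetCard.1 (hg s)).1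
    constructor
    · intro hv
      obtain ⟨s, _, hs⟩ := Finset.mem_biUnion.1 hv
      exact (Finset.mem_erase.1 (Finset.mem_filter.1 (hsub s hs)).1).1 rfl
    · intro s
      ext a
      rw [Finset.mem_filter, Finset.mem_biUnion]
      constructor
      · rintro ⟨⟨t, _, hat⟩, hys⟩
        have h3 : y a = t := (Finset.mem_filter.1 (hsub t hat)).2
        have hts : t = s := by rw [← h3, hys]
        exact hts ▸ hat
      · intro ha
        exact ⟨⟨s, Finset.mem_univ _, ha⟩, (Finset.mem_filter.1 (hsub s ha)).2⟩
  refine Finset.card_bij' (fun A _ => fun s => (A.erase v0).filter (fun i => y i = s))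
    (fun g _ => insert v0 (Finset.univ.biUnion g)) ?_ ?_ ?_ ?_
  · -- maps into piFinset
    intro A hA
    obtain ⟨_, hv0A, hAf⟩ := Finset.mem_filter.1 hA
    rw [Fintype.mem_piFinset]
    intro s
    rw [Finset.mem_powersetCard]
    refine ⟨Finset.filter_subset_filter _ (Finset.erase_subset_erase _ (Finset.subset_univ A)), ?_⟩
    rw [Finset.filter_erase]
    by_cases hs : s = r
    · rw [Finset.card_erase_of_mem (by
        rw [Finset.mem_filter]; exact ⟨hv0A, hs ▸ hv0⟩), hAf, if_pos hs]
    · rw [Finset.erase_eq_of_notMem (by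
        rw [Finset.mem_filter]; rintro ⟨_, h⟩; exact hs (h ▸ hv0 ▸ rfl)), hAf, if_neg hs,
        Nat.sub_zero]
  · -- maps back
    intro g hg
    obtain ⟨hvB, hBf⟩ := hgprop g hg
    rw [Fintype.mem_piFinset] at hg
    rw [Finset.mem_filter]
    refine ⟨Finset.mem_univ _, Finset.mem_insert_self _ _, fun s => ?_⟩
    have hcard : (g s).card = k s - if s = r then 1 else 0 :=
      (Finset.mem_powersetCard.1 (hg s)).2
    rw [Finset.filter_insert]
    by_cases hs : s = r
    · rw [if_pos (hs ▸ hv0), Finset.card_insert_of_notMem (by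
        intro hc
        exact hvB (Finset.mem_filter.1 hc).1), hBf, hcard, if_pos hs]
      subst hs
      omega
    · rw [if_neg (fun hc => hs (by rw [← hc]; exact hv0)), hBf, hcard, if_neg hs]
      omega
  · -- left inverse
    intro A hA
    obtain ⟨_, hv0A, _⟩ := Finset.mem_filter.1 hA
    have hbu : Finset.univ.biUnion (fun s => (A.erase v0).filter (fun i => y i = s))
        = A.erase v0 := by
      ext a
      rw [Finset.mem_biUnion]
      constructor
      · rintro ⟨t, _, hat⟩
        exact (Finset.mem_filter.1 hat).1
      · intro ha
        exact ⟨y a, Finset.mem_univ _, Finset.mem_filter.2 ⟨ha, rfl⟩⟩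
    rw [hbu, Finset.insert_erase hv0A]
  · -- right inverse
    intro g hg
    obtain ⟨hvB, hBf⟩ := hgprop g hg
    funext s
    rw [Finset.erase_insert hvB, hBf]


lemma exists_typed_embedding {S : Type*} [Fintype S] [DecidableEq S] {n M : ℕ}
    (x : Fin n → S) (y : Fin M → S) (A : Finset (Fin M))
    (h : ∀ c, (Finset.univ.filter (fun i => x i = c)).card
      = (A.filter (fun v => y v = c)).card) :
    ∃ e : Fin n → Fin M, Function.Injective e ∧ (∀ i, y (e i) = x i) ∧
      (∀ v, v ∈ A ↔ ∃ i, e i = v) := by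
  have hcard : ∀ c, Fintype.card {i : Fin n // x i = c}
      = Fintype.card {v : {v : Fin M // v ∈ A} // y ↑v = c} := by
    intro c
    rw [Fintype.card_subtype, Fintype.card_subtype, h c, Finset.univ_eq_attach,
      Finset.filter_attach (fun v => y v = c) A, Finset.card_map, Finset.card_attach]
  let e0 : Fin n ≃ {v : Fin M // v ∈ A} :=
    Equiv.ofFiberEquiv (f := x) (g := fun v => y ↑v)
      (fun c => Fintype.equivOfCardEq (hcard c))
  refine ⟨fun i => ↑(e0 i), ?_, ?_, ?_⟩
  · exact fun a b hab => e0.injective (Subtype.ext hab)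
  · exact fun i => Equiv.ofFiberEquiv_map (f := x) (g := fun v : {v : Fin M // v ∈ A} => y ↑v) (fun c => Fintype.equivOfCardEq (hcard c)) i
  · intro v
    constructor
    · intro hv
      exact ⟨e0.symm ⟨v, hv⟩, congrArg Subtype.val (e0.apply_symm_apply ⟨v, hv⟩)⟩
    · rintro ⟨i, rfl⟩
      exact (e0 i).2


lemma config_inj {n M : ℕ} (v0 : Fin M)
    (e e₂ : Fin n → Fin M) (he : Function.Injective e) (he₂ : Function.Injective e₂)
    (A A₂ : Finset (Fin M)) (hA : ∀ v, v ∈ A ↔ ∃ i, e i = v)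
    (hA₂ : ∀ v, v ∈ A₂ ↔ ∃ i, e₂ i = v)
    (hv0 : v0 ∈ A) (hv0₂ : v0 ∈ A₂)
    (E E₂ : Finset (Fin n × Fin n)) (hE : E ⊆ upperPairs n) (hE₂ : E₂ ⊆ upperPairs n)
    (hconn : (graphOf E).Connected) (hconn₂ : (graphOf E₂).Connected)
    (F' F₂ : Finset (Fin M × Fin M)) (hF' : F' ⊆ outP A) (hF₂ : F₂ ⊆ outP A₂)
    (heq : E.image (emap e) ∪ F' = E₂.image (emap e₂) ∪ F₂) :
    A = A₂ ∧ (e = e₂ → E = E₂ ∧ F' = F₂) := by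
  have hout : ∀ q ∈ F', q.1 ∉ A ∧ q.2 ∉ A := by
    intro q hq
    obtain ⟨_, h1, h2⟩ := Finset.mem_filter.1 (hF' hq)
    exact ⟨h1, h2⟩
  have hout₂ : ∀ q ∈ F₂, q.1 ∉ A₂ ∧ q.2 ∉ A₂ := by
    intro q hq
    obtain ⟨_, h1, h2⟩ := Finset.mem_filter.1 (hF₂ hq)
    exact ⟨h1, h2⟩
  have hAeq : A = A₂ := by
    ext j
    have h1 := reach_iff e he A hA E hconn F' hout v0 hv0 j
    have h2 := reach_iff e₂ he₂ A₂ hA₂ E₂ hconn₂ F₂ hout₂ v0 hv0₂ j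
    rw [heq] at h1
    exact h1.symm.trans h2
  refine ⟨hAeq, fun hee => ?_⟩
  subst hAeq
  subst hee
  have hEin : E.image (emap e) ⊆ inP A := by
    rw [← emap_image he hA]; exact Finset.image_subset_image hE
  have hEin₂ : E₂.image (emap e) ⊆ inP A := by
    rw [← emap_image he hA]; exact Finset.image_subset_image hE₂
  have hfilt : ∀ (G : Finset (Fin n × Fin n)) (H : Finset (Fin M × Fin M)),
      G.image (emap e) ⊆ inP A → H ⊆ outP A →
      (G.image (emap e) ∪ H).filter (fun q => q.1 ∈ A) = G.image (emap e) := by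
    intro G H hG hH
    ext q
    rw [Finset.mem_filter, Finset.mem_union]
    constructor
    · rintro ⟨hq | hq, hq1⟩
      · exact hq
      · exact absurd hq1 (Finset.mem_filter.1 (hH hq)).2.1
    · intro hq
      exact ⟨Or.inl hq, (Finset.mem_filter.1 (hG hq)).2.1⟩
  have hfilt2 : ∀ (G : Finset (Fin n × Fin n)) (H : Finset (Fin M × Fin M)),
      G.image (emap e) ⊆ inP A → H ⊆ outP A →
      (G.image (emap e) ∪ H).filter (fun q => q.1 ∉ A) = H := by
    intro G H hG hH
    ext q
    rw [Finset.mem_filter, Finset.mem_union]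
    constructor
    · rintro ⟨hq | hq, hq1⟩
      · exact absurd (Finset.mem_filter.1 (hG hq)).2.1 hq1
      · exact hq
    · intro hq
      exact ⟨Or.inr hq, (Finset.mem_filter.1 (hH hq)).2.1⟩
  have hEimg : E.image (emap e) = E₂.image (emap e) := by
    rw [← hfilt E F' hEin hF', ← hfilt E₂ F₂ hEin₂ hF₂, heq]
  refine ⟨image_cancel_injOn (emap_injOn he) hE hE₂ hEimg, ?_⟩
  rw [← hfilt2 E F' hEin hF', ← hfilt2 E₂ F₂ hEin₂ hF₂, heq]

end ClusterAux


open ClusterAux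

/-- a single term of the expansion identity is at most one. -/
theorem cluster_expansion_term_le_one
    {S : Type*} [Fintype S] [DecidableEq S] [Nonempty S]
    (N : ℕ) (hN : 1 ≤ N)
    (κN : S → S → ℝ) (hκNsym : ∀ r s, κN r s = κN s r)
    (hκN0 : ∀ r s, 0 ≤ κN r s) (hκNle : ∀ r s, κN r s ≤ N)
    (r : S) (k : S → ℕ) (hkr : 1 ≤ k r) (m : S → ℕ) (hkm : ∀ s, k s ≤ m s) :
    pN κN N k *
        (∏ s : S, ((m s - if s = r then 1 else 0).choose (k s - if s = r then 1 else 0) : ℝ)) *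
        ∏ s : S, ∏ t : S, (1 - κN s t / N) ^ (k s * (m t - k t)) ≤ 1 := by
  classical
  have hN0 : (0 : ℝ) < N := by exact_mod_cast hN
  set p : S → S → ℝ := fun s t => κN s t / N with hp
  have hp0 : ∀ s t, 0 ≤ p s t := fun s t => div_nonneg (hκN0 s t) hN0.le
  have hp1 : ∀ s t, p s t ≤ 1 := fun s t => (div_le_one hN0).2 (hκNle s t)
  have hpsym : ∀ a b, p a b = p b a := fun a b => by
    show κN a b / N = κN b a / N
    rw [hκNsym]
  set y := compatVec m with hy
  set x := compatVec k with hx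
  have hyc : ∀ s, (Finset.univ.filter (fun i => y i = s)).card = m s := compatVec_fiber m
  have hxc : ∀ s, (Finset.univ.filter (fun i => x i = s)).card = k s := compatVec_fiber k
  have hv0ex : (Finset.univ.filter (fun i => y i = r)).Nonempty := by
    rw [← Finset.card_pos, hyc]
    exact lt_of_lt_of_le (lt_of_lt_of_le Nat.zero_lt_one hkr) (hkm r)
  obtain ⟨v0, hv0mem⟩ := hv0ex
  have hv0 : y v0 = r := (Finset.mem_filter.1 hv0mem).2
  set 𝒜 := Finset.univ.filter (fun A : Finset (Fin (∑ s : S, m s)) =>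
      v0 ∈ A ∧ ∀ s, (A.filter (fun i => y i = s)).card = k s) with h𝒜
  have hcardA : 𝒜.card
      = ∏ s : S, ((m s - if s = r then 1 else 0).choose (k s - if s = r then 1 else 0)) :=
    card_A y v0 r hv0 k m hkr hyc
  have hExists : ∀ A : Finset (Fin (∑ s : S, m s)),
      ∃ e : Fin (∑ s : S, k s) → Fin (∑ s : S, m s),
      A ∈ 𝒜 → Function.Injective e ∧ (∀ i, y (e i) = x i) ∧ (∀ v, v ∈ A ↔ ∃ i, e i = v) := by
    intro A
    by_cases hA : A ∈ 𝒜
    · obtain ⟨_, _, hAf⟩ := Finset.mem_filter.1 hA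
      obtain ⟨e, h1, h2, h3⟩ := exists_typed_embedding x y A (fun c => by rw [hxc, hAf])
      exact ⟨e, fun _ => ⟨h1, h2, h3⟩⟩
    · exact ⟨fun _ => v0, fun h => absurd h hA⟩
  choose eF heF using hExists
  set CE := (upperPairs (∑ s : S, k s)).powerset.filter (fun E => (graphOf E).Connected) with hCE
  set W : Finset (Fin (∑ s : S, m s) × Fin (∑ s : S, m s)) → ℝ := fun F =>
    (∏ q ∈ F, p (y q.1) (y q.2)) *
      ∏ q ∈ upperPairs (∑ s : S, m s) \ F, (1 - p (y q.1) (y q.2)) with hW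
  have hperA : ∀ A ∈ 𝒜,
      ∑ E ∈ CE, ∑ F' ∈ (outP A).powerset, W (E.image (emap (eF A)) ∪ F')
      = PConn (∑ s : S, k s) x p *
          ∏ s : S, ∏ t : S, (1 - p s t) ^ (k s * (m t - k t)) := by
    intro A hA
    obtain ⟨he1, he2, he3⟩ := heF A hA
    obtain ⟨_, _, hAf⟩ := Finset.mem_filter.1 hA
    rw [hW]
    rw [perA p hpsym y x (eF A) he1 he2 A he3,
      cross_prod p hpsym y A k m hyc hAf]
  have hpN : pN κN N k = PConn (∑ s : S, k s) x p := by
    rw [pN]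
    congr 1
    funext a b
    exact min_eq_right (hp1 a b)
  have hstep1 : pN κN N k *
        (∏ s : S, ((m s - if s = r then 1 else 0).choose (k s - if s = r then 1 else 0) : ℝ)) *
        ∏ s : S, ∏ t : S, (1 - κN s t / N) ^ (k s * (m t - k t))
      = ∑ A ∈ 𝒜, ∑ E ∈ CE, ∑ F' ∈ (outP A).powerset, W (E.image (emap (eF A)) ∪ F') := by
    rw [Finset.sum_congr rfl hperA, Finset.sum_const, nsmul_eq_mul, hcardA, hpN]
    push_cast
    ring
  rw [hstep1]
  set Dom := 𝒜.sigma (fun A => CE ×ˢ (outP A).powerset) with hDom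
  have hsigma : ∑ A ∈ 𝒜, ∑ E ∈ CE, ∑ F' ∈ (outP A).powerset, W (E.image (emap (eF A)) ∪ F')
      = ∑ z ∈ Dom, W ((z.2.1).image (emap (eF z.1)) ∪ z.2.2) := by
    rw [hDom, Finset.sum_sigma]
    exact Finset.sum_congr rfl fun A hA => by rw [Finset.sum_product]
  rw [hsigma]
  have hinj : ∀ z ∈ Dom, ∀ z' ∈ Dom,
      (fun z : (Σ _ : Finset (Fin (∑ s : S, m s)),
          Finset (Fin (∑ s : S, k s) × Fin (∑ s : S, k s)) ×
            Finset (Fin (∑ s : S, m s) × Fin (∑ s : S, m s))) =>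
        (z.2.1).image (emap (eF z.1)) ∪ z.2.2) z
      = (fun z : (Σ _ : Finset (Fin (∑ s : S, m s)),
          Finset (Fin (∑ s : S, k s) × Fin (∑ s : S, k s)) ×
            Finset (Fin (∑ s : S, m s) × Fin (∑ s : S, m s))) =>
        (z.2.1).image (emap (eF z.1)) ∪ z.2.2) z' → z = z' := by
    rintro ⟨A, E, F'⟩ hz ⟨A₂, E₂, F₂⟩ hz' hzz
    dsimp only at hzz
    rw [hDom, Finset.mem_sigma] at hz hz'
    obtain ⟨hA𝒜, hEF⟩ := hz
    obtain ⟨hA𝒜₂, hEF₂⟩ := hz'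
    obtain ⟨hE, hF'⟩ := Finset.mem_product.1 hEF
    obtain ⟨hE₂, hF₂⟩ := Finset.mem_product.1 hEF₂
    obtain ⟨he1, he2, he3⟩ := heF A hA𝒜
    obtain ⟨he1₂, he2₂, he3₂⟩ := heF A₂ hA𝒜₂
    have hv0A : v0 ∈ A := (Finset.mem_filter.1 hA𝒜).2.1
    have hv0A₂ : v0 ∈ A₂ := (Finset.mem_filter.1 hA𝒜₂).2.1
    obtain ⟨hAeq, hrest⟩ := config_inj v0 (eF A) (eF A₂) he1 he1₂ A A₂ he3 he3₂
      hv0A hv0A₂ E E₂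
      (Finset.mem_powerset.1 (Finset.mem_filter.1 hE).1)
      (Finset.mem_powerset.1 (Finset.mem_filter.1 hE₂).1)
      (Finset.mem_filter.1 hE).2 (Finset.mem_filter.1 hE₂).2
      F' F₂ (Finset.mem_powerset.1 hF') (Finset.mem_powerset.1 hF₂) hzz
    subst hAeq
    obtain ⟨hEeq, hFeq⟩ := hrest rfl
    subst hEeq
    subst hFeq
    rfl
  have himgsub : Dom.image (fun z : (Σ _ : Finset (Fin (∑ s : S, m s)),
      Finset (Fin (∑ s : S, k s) × Fin (∑ s : S, k s)) ×
        Finset (Fin (∑ s : S, m s) × Fin (∑ s : S, m s))) =>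
      (z.2.1).image (emap (eF z.1)) ∪ z.2.2)
      ⊆ (upperPairs (∑ s : S, m s)).powerset := by
    intro F hF
    obtain ⟨z, hz, rfl⟩ := Finset.mem_image.1 hF
    obtain ⟨A, E, F'⟩ := z
    rw [hDom, Finset.mem_sigma] at hz
    obtain ⟨hA𝒜, hEF⟩ := hz
    obtain ⟨hE, hF'⟩ := Finset.mem_product.1 hEF
    obtain ⟨he1, he2, he3⟩ := heF A hA𝒜
    rw [Finset.mem_powerset]
    refine Finset.union_subset ?_ ?_
    · have hin : E.image (emap (eF A)) ⊆ inP A := by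
        rw [← emap_image he1 he3]
        exact Finset.image_subset_image (Finset.mem_powerset.1 (Finset.mem_filter.1 hE).1)
      exact subset_trans hin (Finset.filter_subset _ _)
    · exact subset_trans (Finset.mem_powerset.1 hF') (Finset.filter_subset _ _)
  have hWnn : ∀ F, 0 ≤ W F := by
    intro F
    rw [hW]
    refine mul_nonneg (Finset.prod_nonneg fun q _ => hp0 _ _)
      (Finset.prod_nonneg fun q _ => ?_)
    rw [sub_nonneg]
    exact hp1 _ _
  calc ∑ z ∈ Dom, W ((z.2.1).image (emap (eF z.1)) ∪ z.2.2)
      = ∑ F ∈ Dom.image (fun z : (Σ _ : Finset (Fin (∑ s : S, m s)),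
          Finset (Fin (∑ s : S, k s) × Fin (∑ s : S, k s)) ×
            Finset (Fin (∑ s : S, m s) × Fin (∑ s : S, m s))) =>
          (z.2.1).image (emap (eF z.1)) ∪ z.2.2), W F := (Finset.sum_image hinj).symm
    _ ≤ ∑ F ∈ (upperPairs (∑ s : S, m s)).powerset, W F :=
        Finset.sum_le_sum_of_subset_of_nonneg himgsub (fun F _ _ => hWnn F)
    _ = 1 := by rw [hW]; exact sum_weight_one _ _



end
end

section
/- Let N ≥ 1 and let κ_N be a kernel on S with κ_N(r,s) ≤ N for all r, s ∈ S. For all h', h ∈ ℕ₀^S with h' ≠ 0 and h' ≤ h componentwise, p_N(h) ≥ p_N(h') · ∏_{r∈S} (1 − e^{−(κ_N h')_r / N})^{h_r − h'_r}. -/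
open scoped Classical ENNReal
open Filter MeasureTheory

noncomputable section

-- ===================== auxiliary lemmas =====================

lemma multiset_map_get {S : Type*} (L : List S) {n : ℕ} (h : L.length = n) :
    Multiset.map (fun i : Fin n => L.get (Fin.cast h.symm i)) (Finset.univ : Finset (Fin n)).val
      = (L : Multiset S) := by
  subst h
  have h1 : (Finset.univ : Finset (Fin L.length)).val = ↑(List.finRange L.length) := by
    simp [Fin.univ_def]
  rw [h1]
  have : (fun i : Fin L.length => L.get (Fin.cast rfl i)) = L.get := by
    funext i; rfl
  rw [this, Multiset.map_coe, List.map_get_finRange]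

lemma compatVec_multiset {S : Type*} [Fintype S] (k : S → ℕ) :
    Multiset.map (compatVec k) (Finset.univ : Finset (Fin (∑ s : S, k s))).val
      = ∑ s : S, (k s) • ({s} : Multiset S) := by
  rw [show compatVec k = fun i => (compatList k).get (Fin.cast (compatList_length k).symm i) from rfl,
    multiset_map_get (compatList k) (compatList_length k)]
  exact Multiset.coe_toList _

lemma count_type_multiset {S : Type*} [Fintype S] [DecidableEq S] (k : S → ℕ) (r : S) :
    Multiset.count r (∑ s : S, (k s) • ({s} : Multiset S)) = k r := by
  rw [Multiset.count_sum']
  rw [Finset.sum_eq_single r]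
  · simp
  · intro s _ hs
    simp [Multiset.count_nsmul, Multiset.count_singleton, (Ne.symm hs : r ≠ s)]
  · simp

lemma prod_fin_eq_prod_pow {S M : Type*} [Fintype S] [CommMonoid M] (k : S → ℕ) (g : S → M) :
    ∏ i : Fin (∑ s : S, k s), g (compatVec k i) = ∏ s : S, g s ^ k s := by
  have h1 : ∏ i : Fin (∑ s : S, k s), g (compatVec k i)
      = (Multiset.map g (Multiset.map (compatVec k) (Finset.univ : Finset (Fin (∑ s : S, k s))).val)).prod := by
    rw [Multiset.map_map]; rfl
  rw [h1, compatVec_multiset,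
    show Multiset.map g (∑ s : S, k s • ({s} : Multiset S))
      = (Multiset.mapAddMonoidHom g) (∑ s : S, k s • ({s} : Multiset S)) from rfl,
    map_sum (Multiset.mapAddMonoidHom g), Multiset.prod_sum]
  refine Finset.prod_congr rfl fun s _ => ?_
  simp [Multiset.mapAddMonoidHom, Multiset.nsmul_singleton, Multiset.map_replicate,
    Multiset.prod_replicate]

lemma exists_emb {S : Type*} [DecidableEq S] {m n : ℕ} (y : Fin m → S) (z : Fin n → S)
    (hc : ∀ s : S, (Finset.univ.filter (fun i => y i = s)).card
        ≤ (Finset.univ.filter (fun j => z j = s)).card) :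
    ∃ e : Fin m → Fin n, Function.Injective e ∧ ∀ i, z (e i) = y i := by
  have hF : ∀ s : S, Nonempty ({i : Fin m // y i = s} ↪ {j : Fin n // z j = s}) := by
    intro s
    apply Function.Embedding.nonempty_of_card_le
    rw [Fintype.card_subtype, Fintype.card_subtype]
    exact hc s
  let F : ∀ s : S, {i : Fin m // y i = s} ↪ {j : Fin n // z j = s} := fun s => (hF s).some
  refine ⟨fun i => (F (y i) ⟨i, rfl⟩ : {j : Fin n // z j = y i}).val, ?_, ?_⟩
  · have haux : ∀ (s : S) (i : Fin m) (h : y i = s),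
        (F (y i) ⟨i, rfl⟩ : {j : Fin n // z j = y i}).val = (F s ⟨i, h⟩).val := by
      intro s i h
      cases h
      rfl
    intro i i' hii
    dsimp only at hii
    have hz : z ((F (y i) ⟨i, rfl⟩ : {j : Fin n // z j = y i}).val) = y i :=
      (F (y i) ⟨i, rfl⟩).prop
    have hz' : z ((F (y i') ⟨i', rfl⟩ : {j : Fin n // z j = y i'}).val) = y i' :=
      (F (y i') ⟨i', rfl⟩).prop
    have hyy : y i' = y i := by
      rw [← hz', ← hz]; exact congrArg z hii.symm
    rw [haux (y i) i' hyy] at hii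
    have := (F (y i)).injective (Subtype.ext hii)
    exact congrArg Subtype.val this
  · intro i
    exact (F (y i) ⟨i, rfl⟩).prop


lemma card_fiber_compatVec {S : Type*} [Fintype S] [DecidableEq S] (k : S → ℕ) (s : S) :
    (Finset.univ.filter (fun i => compatVec k i = s)).card = k s := by
  have h := congrArg (Multiset.count s) (compatVec_multiset k)
  rw [count_type_multiset] at h
  rw [← h, Multiset.count_map, Finset.card_def, Finset.filter_val]
  congr 1
  exact Multiset.filter_congr (fun a _ => eq_comm)

lemma prod_pow_fiber {β S M : Type*} [Fintype S] [DecidableEq S] [CommMonoid M]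
    (s : Finset β) (x : β → S) (g : S → M) :
    ∏ i ∈ s, g (x i) = ∏ r : S, g r ^ (s.filter (fun i => x i = r)).card := by
  classical
  rw [← Finset.prod_fiberwise_of_maps_to (fun i _ => Finset.mem_univ (x i)) (fun i => g (x i))]
  refine Finset.prod_congr rfl fun r _ => ?_
  rw [Finset.prod_congr rfl (fun i hi => by rw [(Finset.mem_filter.1 hi).2] : ∀ i ∈ s.filter (fun i => x i = r), g (x i) = g r), Finset.prod_const]

section GraphAux

variable {n m : ℕ} (e : Fin m → Fin n)

def phiMap : Fin m × Fin m → Fin n × Fin n :=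
  fun q => if e q.1 < e q.2 then (e q.1, e q.2) else (e q.2, e q.1)

def rangeE : Finset (Fin n) := Finset.univ.image e

def pA : Finset (Fin n × Fin n) :=
  (upperPairs n).filter fun q => q.1 ∈ rangeE e ∧ q.2 ∈ rangeE e

def pB (v : Fin n) : Finset (Fin n × Fin n) :=
  (upperPairs n).filter fun q => (q.1 = v ∧ q.2 ∈ rangeE e) ∨ (q.2 = v ∧ q.1 ∈ rangeE e)

def pC : Finset (Fin n × Fin n) :=
  (upperPairs n).filter fun q => q.1 ∉ rangeE e ∧ q.2 ∉ rangeE e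

lemma mem_upperPairs {k : ℕ} (q : Fin k × Fin k) : q ∈ upperPairs k ↔ q.1 < q.2 := by
  simp [upperPairs]

lemma mem_rangeE (v : Fin n) : v ∈ rangeE e ↔ ∃ j, e j = v := by
  simp [rangeE]

lemma phi_comm (i j : Fin m) : phiMap e (i, j) = phiMap e (j, i) := by
  unfold phiMap
  rcases lt_trichotomy (e i) (e j) with hlt | heq | hlt
  · simp [hlt, asymm hlt]
  · simp [heq]
  · simp [hlt, asymm hlt]

lemma phi_cases (q : Fin m × Fin m) :
    phiMap e q = (e q.1, e q.2) ∨ phiMap e q = (e q.2, e q.1) := by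
  unfold phiMap; split <;> simp

lemma phi_mem_pA (he : Function.Injective e) {q : Fin m × Fin m} (hq : q ∈ upperPairs m) :
    phiMap e q ∈ pA e := by
  rw [mem_upperPairs] at hq
  have hne : e q.1 ≠ e q.2 := fun h => (ne_of_lt hq) (he h)
  unfold pA
  rw [Finset.mem_filter, mem_upperPairs]
  unfold phiMap
  split
  · refine ⟨‹_›, ?_, ?_⟩ <;> rw [mem_rangeE] <;> exact ⟨_, rfl⟩
  · refine ⟨lt_of_le_of_ne (le_of_not_gt ‹_›) (Ne.symm hne), ?_, ?_⟩ <;>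
      rw [mem_rangeE] <;> exact ⟨_, rfl⟩

lemma phi_injOn (he : Function.Injective e) {q q' : Fin m × Fin m}
    (hq : q ∈ upperPairs m) (hq' : q' ∈ upperPairs m) (hval : phiMap e q = phiMap e q') :
    q = q' := by
  rw [mem_upperPairs] at hq hq'
  rcases phi_cases e q with h | h <;> rcases phi_cases e q' with h' | h' <;>
    rw [h, h'] at hval <;>
    obtain ⟨h1, h2⟩ := Prod.mk.injEq .. ▸ hval
  · exact Prod.ext (he h1) (he h2)
  · have a1 := he h1; have a2 := he h2
    rw [a2] at hq
    exact absurd (hq.trans hq') (by rw [a1]; exact lt_irrefl _)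
  · have a1 := he h1; have a2 := he h2
    rw [a1] at hq
    exact absurd (hq.trans hq') (by rw [← a2]; exact lt_irrefl _)
  · exact Prod.ext (he h2) (he h1)


lemma phi_surj (he : Function.Injective e) {q' : Fin n × Fin n} (hq' : q' ∈ pA e) :
    ∃ q ∈ upperPairs m, phiMap e q = q' := by
  rw [pA, Finset.mem_filter, mem_upperPairs] at hq'
  obtain ⟨hlt, h1, h2⟩ := hq'
  rw [mem_rangeE] at h1 h2
  obtain ⟨j1, hj1⟩ := h1
  obtain ⟨j2, hj2⟩ := h2
  have hne : j1 ≠ j2 := fun h => (ne_of_lt hlt) (hj1 ▸ hj2 ▸ h ▸ rfl)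
  rcases lt_or_gt_of_ne hne with hj | hj
  · refine ⟨(j1, j2), (mem_upperPairs _).2 hj, ?_⟩
    unfold phiMap
    simp only []
    rw [if_pos (by rw [hj1, hj2]; exact hlt), hj1, hj2]
  · refine ⟨(j2, j1), (mem_upperPairs _).2 hj, ?_⟩
    unfold phiMap
    simp only []
    rw [if_neg (by rw [hj1, hj2]; exact not_lt.2 hlt.le), hj1, hj2]

lemma graph_image (he : Function.Injective e) {E' : Finset (Fin m × Fin m)}
    (hE' : E' ⊆ upperPairs m) :
    SimpleGraph.fromRel (fun i j : Fin m => phiMap e (i, j) ∈ E'.image (phiMap e))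
      = graphOf E' := by
  ext i j
  rw [SimpleGraph.fromRel_adj, graphOf, SimpleGraph.fromRel_adj]
  refine and_congr Iff.rfl ?_
  rw [phi_comm e j i, or_self]
  constructor
  · intro hmem
    rw [Finset.mem_image] at hmem
    obtain ⟨q, hqE, hq⟩ := hmem
    rcases lt_trichotomy i j with hij | hij | hij
    · left
      have : q = (i, j) := phi_injOn e he (hE' hqE) ((mem_upperPairs _).2 hij) hq
      rwa [← this]
    · exfalso
      subst hij
      have hthis : phiMap e q = (e i, e i) := by
        rw [hq]; unfold phiMap; simp
      have hqm := hE' hqE; rw [mem_upperPairs] at hqm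
      rcases phi_cases e q with h | h <;> rw [h] at hthis <;>
        obtain ⟨a, b⟩ := Prod.mk.injEq .. ▸ hthis
      · exact (ne_of_lt hqm) (he (a.trans b.symm))
      · exact (ne_of_lt hqm) (he (b.trans a.symm))
    · right
      have : q = (j, i) := phi_injOn e he (hE' hqE)
        ((mem_upperPairs _).2 hij) (hq.trans (phi_comm e i j))
      rwa [← this]
  · rintro (hmem | hmem)
    · exact Finset.mem_image.2 ⟨(i, j), hmem, rfl⟩
    · exact Finset.mem_image.2 ⟨(j, i), hmem, (phi_comm e j i)⟩

lemma graph_filter (F : Finset (Fin n × Fin n)) :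
    graphOf ((upperPairs m).filter fun q => phiMap e q ∈ F)
      = SimpleGraph.fromRel (fun i j : Fin m => phiMap e (i, j) ∈ F) := by
  ext i j
  rw [graphOf, SimpleGraph.fromRel_adj, SimpleGraph.fromRel_adj]
  simp only [Finset.mem_filter, mem_upperPairs]
  constructor
  · rintro ⟨hne, (⟨_, h⟩ | ⟨_, h⟩)⟩
    · exact ⟨hne, Or.inl h⟩
    · exact ⟨hne, Or.inr h⟩
  · rintro ⟨hne, h⟩
    refine ⟨hne, ?_⟩
    rcases lt_or_gt_of_ne hne with hij | hij
    · left
      refine ⟨hij, ?_⟩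
      rcases h with h | h
      · exact h
      · rwa [← phi_comm e i j] at h
    · right
      refine ⟨hij, ?_⟩
      rcases h with h | h
      · rwa [phi_comm e i j] at h
      · exact h

lemma image_sdiff_phi (he : Function.Injective e) {E' : Finset (Fin m × Fin m)}
    (hE' : E' ⊆ upperPairs m) :
    pA e \ E'.image (phiMap e) = (upperPairs m \ E').image (phiMap e) := by
  ext q'
  simp only [Finset.mem_sdiff, Finset.mem_image]
  constructor
  · rintro ⟨hq'A, hq'n⟩
    obtain ⟨q, hq, hphi⟩ := phi_surj e he hq'A
    exact ⟨q, ⟨hq, fun hqE => hq'n ⟨q, hqE, hphi⟩⟩, hphi⟩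
  · rintro ⟨q, ⟨hq, hqn⟩, hphi⟩
    refine ⟨hphi ▸ phi_mem_pA e he hq, ?_⟩
    rintro ⟨q'', hq''E, hq''⟩
    exact hqn ((phi_injOn e he (hE' hq''E) hq (hq''.trans hphi.symm)) ▸ hq''E)

/-- total weight of a powerset sum is 1 -/
lemma sum_powerset_weight_one {α : Type*} [DecidableEq α] (T : Finset α) (f : α → ℝ) :
    ∑ F ∈ T.powerset, (∏ q ∈ F, f q) * ∏ q ∈ T \ F, (1 - f q) = 1 := by
  rw [← Finset.prod_add f (fun q => 1 - f q) T]
  exact Finset.prod_eq_one fun q _ => by ring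

lemma sumA {S : Type*} (he : Function.Injective e) (x : Fin n → S) (p : S → S → ℝ)
    (hpsym : ∀ r s, p r s = p s r) :
    ∑ F ∈ (pA e).powerset.filter
        (fun F => (SimpleGraph.fromRel fun i j : Fin m => phiMap e (i, j) ∈ F).Connected),
      (∏ q ∈ F, p (x q.1) (x q.2)) * ∏ q ∈ pA e \ F, (1 - p (x q.1) (x q.2))
      = PConn m (fun j => x (e j)) p := by
  have hval : ∀ q : Fin m × Fin m,
      p (x (phiMap e q).1) (x (phiMap e q).2) = p (x (e q.1)) (x (e q.2)) := by
    intro q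
    rcases phi_cases e q with h | h <;> rw [h]
    exact hpsym _ _
  rw [PConn]
  refine Finset.sum_nbij' (fun F => (upperPairs m).filter fun q => phiMap e q ∈ F)
    (fun E' => E'.image (phiMap e)) ?_ ?_ ?_ ?_ ?_
  · intro F hF
    rw [Finset.mem_filter, Finset.mem_powerset] at hF ⊢
    exact ⟨Finset.filter_subset _ _, by rw [graph_filter]; exact hF.2⟩
  · intro E' hE'
    rw [Finset.mem_filter, Finset.mem_powerset] at hE' ⊢
    constructor
    · intro q' hq'
      rw [Finset.mem_image] at hq'
      obtain ⟨q, hq, rfl⟩ := hq'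
      exact phi_mem_pA e he (hE'.1 hq)
    · rw [graph_image e he hE'.1]; exact hE'.2
  · intro F hF
    rw [Finset.mem_filter, Finset.mem_powerset] at hF
    ext q'
    simp only [Finset.mem_image, Finset.mem_filter]
    constructor
    · rintro ⟨q, ⟨hqm, hqF⟩, rfl⟩
      exact hqF
    · intro hq'
      obtain ⟨q, hq, rfl⟩ := phi_surj e he (hF.1 hq')
      exact ⟨q, ⟨hq, hq'⟩, rfl⟩
  · intro E' hE'
    rw [Finset.mem_filter, Finset.mem_powerset] at hE'
    ext q
    simp only [Finset.mem_filter, Finset.mem_image]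
    constructor
    · rintro ⟨hqm, q'', hq''E, hq''⟩
      rwa [← phi_injOn e he (hE'.1 hq''E) hqm hq'']
    · intro hq
      exact ⟨hE'.1 hq, q, hq, rfl⟩
  · intro F hF
    rw [Finset.mem_filter, Finset.mem_powerset] at hF
    have hsub : (upperPairs m).filter (fun q => phiMap e q ∈ F) ⊆ upperPairs m :=
      Finset.filter_subset _ _
    have himg : ((upperPairs m).filter (fun q => phiMap e q ∈ F)).image (phiMap e) = F := by
      ext q'
      simp only [Finset.mem_image, Finset.mem_filter]
      constructor
      · rintro ⟨q, ⟨hqm, hqF⟩, rfl⟩; exact hqF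
      · intro hq'
        obtain ⟨q, hq, rfl⟩ := phi_surj e he (hF.1 hq')
        exact ⟨q, ⟨hq, hq'⟩, rfl⟩
    have h1 : ∏ q ∈ F, p (x q.1) (x q.2)
        = ∏ q ∈ (upperPairs m).filter (fun q => phiMap e q ∈ F),
            p (x ((fun j => e j) q.1)) (x (e q.2)) := by
      conv_lhs => rw [← himg]
      rw [Finset.prod_image (fun q hq q' hq' hqq =>
        phi_injOn e he (hsub hq) (hsub hq') hqq)]
      exact Finset.prod_congr rfl fun q _ => hval q
    have h2 : ∏ q ∈ pA e \ F, (1 - p (x q.1) (x q.2))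
        = ∏ q ∈ upperPairs m \ (upperPairs m).filter (fun q => phiMap e q ∈ F),
            (1 - p (x (e q.1)) (x (e q.2))) := by
      conv_lhs => rw [← himg, image_sdiff_phi e he hsub]
      rw [Finset.prod_image (fun q hq q' hq' hqq =>
        phi_injOn e he (Finset.mem_sdiff.1 hq).1 (Finset.mem_sdiff.1 hq').1 hqq)]
      exact Finset.prod_congr rfl fun q _ => by rw [hval q]
    rw [h1, h2]

lemma sumB {S : Type*} (he : Function.Injective e) (x : Fin n → S) (p : S → S → ℝ)
    (hpsym : ∀ r s, p r s = p s r) (v : Fin n) (hv : v ∉ rangeE e) :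
    ∑ F ∈ (pB e v).powerset.filter (fun F => F.Nonempty),
      (∏ q ∈ F, p (x q.1) (x q.2)) * ∏ q ∈ pB e v \ F, (1 - p (x q.1) (x q.2))
      = 1 - ∏ j : Fin m, (1 - p (x v) (x (e j))) := by
  have hvne : ∀ j, e j ≠ v := fun j h => hv ((mem_rangeE e v).2 ⟨j, h⟩)
  -- the filter is the powerset minus ∅
  have hfe : (pB e v).powerset.filter (fun F => F.Nonempty)
      = (pB e v).powerset.erase ∅ := by
    ext F
    simp [Finset.nonempty_iff_ne_empty, and_comm]
  have htot := sum_powerset_weight_one (pB e v) (fun q => p (x q.1) (x q.2))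
  have hkey := Finset.add_sum_erase (pB e v).powerset
    (fun F => (∏ q ∈ F, p (x q.1) (x q.2)) * ∏ q ∈ pB e v \ F, (1 - p (x q.1) (x q.2)))
    (Finset.empty_mem_powerset _)
  rw [htot] at hkey
  have hempty : (∏ q ∈ (∅ : Finset (Fin n × Fin n)), p (x q.1) (x q.2))
      * ∏ q ∈ pB e v \ ∅, (1 - p (x q.1) (x q.2))
      = ∏ q ∈ pB e v, (1 - p (x q.1) (x q.2)) := by
    rw [Finset.prod_empty, Finset.sdiff_empty, one_mul]
  rw [hfe]
  have hsum : ∑ F ∈ (pB e v).powerset.erase ∅,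
      (∏ q ∈ F, p (x q.1) (x q.2)) * ∏ q ∈ pB e v \ F, (1 - p (x q.1) (x q.2))
      = 1 - ∏ q ∈ pB e v, (1 - p (x q.1) (x q.2)) := by
    rw [← hempty]
    linarith [hkey]
  rw [hsum]
  -- now compute the full product over pB e v via the parametrization ψ
  have hpsimage : Finset.univ.image (fun j : Fin m => if v < e j then (v, e j) else (e j, v))
      = pB e v := by
    ext q
    simp only [Finset.mem_image, Finset.mem_univ, true_and, pB, Finset.mem_filter,
      mem_upperPairs]
    constructor
    · rintro ⟨j, rfl⟩
      rcases lt_or_gt_of_ne (Ne.symm (hvne j)) with hj | hj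
      · rw [if_pos hj]
        exact ⟨hj, Or.inl ⟨rfl, (mem_rangeE e _).2 ⟨j, rfl⟩⟩⟩
      · rw [if_neg (not_lt.2 hj.le)]
        exact ⟨hj, Or.inr ⟨rfl, (mem_rangeE e _).2 ⟨j, rfl⟩⟩⟩
    · rintro ⟨hlt, (⟨h1, h2⟩ | ⟨h1, h2⟩)⟩
      · obtain ⟨j, hj⟩ := (mem_rangeE e _).1 h2
        refine ⟨j, ?_⟩
        rw [if_pos (by rw [hj, ← h1]; exact hlt), hj, ← h1]
      · obtain ⟨j, hj⟩ := (mem_rangeE e _).1 h2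
        refine ⟨j, ?_⟩
        rw [if_neg (by rw [hj, ← h1]; exact not_lt.2 hlt.le), hj, ← h1]
  have hpsinj : ∀ j ∈ Finset.univ, ∀ j' ∈ Finset.univ,
      (if v < e j then (v, e j) else (e j, v)) = (if v < e j' then (v, e j') else (e j', v))
        → j = j' := by
    intro j _ j' _ hjj
    split_ifs at hjj with h1 h2 h2 <;> obtain ⟨a, b⟩ := Prod.mk.injEq .. ▸ hjj
    · exact he b
    · exact absurd a.symm (hvne j')
    · exact absurd a (hvne j)
    · exact he a
  rw [← hpsimage, Finset.prod_image hpsinj]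
  congr 1
  refine Finset.prod_congr rfl fun j _ => ?_
  split_ifs with hj
  · rfl
  · exact congrArg (1 - ·) (hpsym _ _)

lemma good_connected (he : Function.Injective e) (hm : 0 < m)
    {E : Finset (Fin n × Fin n)} (hE : E ⊆ upperPairs n)
    (hconn : (SimpleGraph.fromRel fun i j : Fin m => phiMap e (i, j) ∈ E ∩ pA e).Connected)
    (hcov : ∀ v : Fin n, v ∉ rangeE e → (E ∩ pB e v).Nonempty) :
    (graphOf E).Connected := by
  set i₀ : Fin m := ⟨0, hm⟩
  have hhom : ∀ i j : Fin m,
      (SimpleGraph.fromRel fun i j : Fin m => phiMap e (i, j) ∈ E ∩ pA e).Adj i j →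
        (graphOf E).Adj (e i) (e j) := by
    intro i j hadj
    rw [SimpleGraph.fromRel_adj] at hadj
    obtain ⟨hne, hmem⟩ := hadj
    rw [phi_comm e j i, or_self] at hmem
    have hmemE : phiMap e (i, j) ∈ E := (Finset.mem_inter.1 hmem).1
    rw [graphOf, SimpleGraph.fromRel_adj]
    refine ⟨fun h => hne (he h), ?_⟩
    rcases phi_cases e (i, j) with h | h <;> rw [h] at hmemE
    · exact Or.inl hmemE
    · exact Or.inr hmemE
  let hf : SimpleGraph.Hom (SimpleGraph.fromRel fun i j : Fin m => phiMap e (i, j) ∈ E ∩ pA e)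
      (graphOf E) := ⟨e, fun {i j} h => hhom i j h⟩
  have hreachR : ∀ j : Fin m, (graphOf E).Reachable (e i₀) (e j) := by
    intro j
    have h := SimpleGraph.Reachable.map hf (hconn.preconnected i₀ j)
    exact h
  have hadjq : ∀ q ∈ E, (graphOf E).Adj q.1 q.2 := by
    intro q hq
    rw [graphOf, SimpleGraph.fromRel_adj]
    have := hE hq
    rw [mem_upperPairs] at this
    exact ⟨ne_of_lt this, Or.inl (by rwa [Prod.mk.eta])⟩
  have hreach : ∀ v : Fin n, (graphOf E).Reachable (e i₀) v := by
    intro v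
    by_cases hv : v ∈ rangeE e
    · obtain ⟨j, rfl⟩ := (mem_rangeE e v).1 hv
      exact hreachR j
    · obtain ⟨q, hq⟩ := hcov v hv
      rw [Finset.mem_inter] at hq
      have hadj := hadjq q hq.1
      have hqB := hq.2
      rw [pB, Finset.mem_filter] at hqB
      rcases hqB.2 with ⟨h1, h2⟩ | ⟨h1, h2⟩
      · obtain ⟨j, hj⟩ := (mem_rangeE e _).1 h2
        rw [← h1]
        refine (hreachR j).trans ?_
        rw [hj]
        exact hadj.symm.reachable
      · obtain ⟨j, hj⟩ := (mem_rangeE e _).1 h2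
        rw [← h1]
        refine (hreachR j).trans ?_
        rw [hj]
        exact hadj.reachable
  rw [SimpleGraph.connected_iff]
  exact ⟨fun u w => (hreach u).symm.trans (hreach w), ⟨e i₀⟩⟩

lemma dAB (v : Fin n) (hv : v ∉ rangeE e) : Disjoint (pA e) (pB e v) := by
  rw [Finset.disjoint_left]
  intro q hqA hqB
  rw [pA, Finset.mem_filter] at hqA
  rw [pB, Finset.mem_filter] at hqB
  rcases hqB.2 with ⟨h1, _⟩ | ⟨h1, _⟩
  · exact hv (h1 ▸ hqA.2.1)
  · exact hv (h1 ▸ hqA.2.2)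

lemma dAC : Disjoint (pA e) (pC e) := by
  rw [Finset.disjoint_left]
  intro q hqA hqC
  rw [pA, Finset.mem_filter] at hqA
  rw [pC, Finset.mem_filter] at hqC
  exact hqC.2.1 hqA.2.1

lemma dCB (v : Fin n) : Disjoint (pC e) (pB e v) := by
  rw [Finset.disjoint_left]
  intro q hqC hqB
  rw [pC, Finset.mem_filter] at hqC
  rw [pB, Finset.mem_filter] at hqB
  rcases hqB.2 with ⟨_, h2⟩ | ⟨_, h2⟩
  · exact hqC.2.2 h2
  · exact hqC.2.1 h2

lemma dBB {v w : Fin n} (hv : v ∉ rangeE e) (hw : w ∉ rangeE e) (hvw : v ≠ w) :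
    Disjoint (pB e v) (pB e w) := by
  rw [Finset.disjoint_left]
  intro q hqv hqw
  rw [pB, Finset.mem_filter] at hqv hqw
  rcases hqv.2 with ⟨h1, h2⟩ | ⟨h1, h2⟩ <;> rcases hqw.2 with ⟨h1', h2'⟩ | ⟨h1', h2'⟩
  · exact hvw (h1 ▸ h1' ▸ rfl)
  · exact hv (h1 ▸ h2')
  · exact hv (h1 ▸ h2')
  · exact hvw (h1 ▸ h1' ▸ rfl)

lemma parts_cover {q : Fin n × Fin n} (hq : q ∈ upperPairs n) :
    q ∈ pA e ∨ q ∈ pC e ∨ (q.1 ∉ rangeE e ∧ q ∈ pB e q.1) ∨ (q.2 ∉ rangeE e ∧ q ∈ pB e q.2) := by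
  by_cases h1 : q.1 ∈ rangeE e <;> by_cases h2 : q.2 ∈ rangeE e
  · exact Or.inl (by rw [pA, Finset.mem_filter]; exact ⟨hq, h1, h2⟩)
  · refine Or.inr (Or.inr (Or.inr ⟨h2, ?_⟩))
    rw [pB, Finset.mem_filter]
    exact ⟨hq, Or.inr ⟨rfl, h1⟩⟩
  · refine Or.inr (Or.inr (Or.inl ⟨h1, ?_⟩))
    rw [pB, Finset.mem_filter]
    exact ⟨hq, Or.inl ⟨rfl, h2⟩⟩
  · exact Or.inr (Or.inl (by rw [pC, Finset.mem_filter]; exact ⟨hq, h1, h2⟩))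

def tPart : (Fin n ⊕ Bool) → Finset (Fin n × Fin n) :=
  Sum.elim (pB e) (fun b => cond b (pC e) (pA e))

def cPart : (Fin n ⊕ Bool) → Finset (Fin n × Fin n) → Prop :=
  Sum.elim (fun _ F => F.Nonempty)
    (fun b F => cond b True
      ((SimpleGraph.fromRel fun i j : Fin m => phiMap e (i, j) ∈ F).Connected))

@[simp] lemma tPart_inl (v : Fin n) : tPart e (Sum.inl v) = pB e v := rfl
@[simp] lemma tPart_inrf : tPart e (Sum.inr false) = pA e := rfl
@[simp] lemma tPart_inrt : tPart e (Sum.inr true) = pC e := rfl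
@[simp] lemma cPart_inl (v : Fin n) (F) : cPart e (Sum.inl v) F = F.Nonempty := rfl
@[simp] lemma cPart_inrf (F) : cPart e (Sum.inr false) F
    = (SimpleGraph.fromRel fun i j : Fin m => phiMap e (i, j) ∈ F).Connected := rfl
@[simp] lemma cPart_inrt (F) : cPart e (Sum.inr true) F = True := rfl

lemma sum_powerset_union_mul {α : Type*} [DecidableEq α] (s t : Finset α)
    (hd : Disjoint s t) (f g : Finset α → ℝ) :
    ∑ E ∈ (s ∪ t).powerset, f (E ∩ s) * g (E ∩ t)
      = (∑ A ∈ s.powerset, f A) * ∑ B ∈ t.powerset, g B := by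
  rw [Finset.sum_mul_sum, ← Finset.sum_product']
  refine Finset.sum_nbij' (fun E => (E ∩ s, E ∩ t)) (fun P => P.1 ∪ P.2) ?_ ?_ ?_ ?_ ?_
  · intro E hE
    simp [Finset.mem_product, Finset.inter_subset_right]
  · intro P hP
    simp only [Finset.mem_product, Finset.mem_powerset] at hP
    simp only [Finset.mem_powerset]
    exact Finset.union_subset_union hP.1 hP.2
  · intro E hE
    simp only [Finset.mem_powerset] at hE
    simp only []
    rw [← Finset.inter_union_distrib_left, Finset.inter_eq_left.2 hE]
  · intro P hP
    simp only [Finset.mem_product, Finset.mem_powerset] at hP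
    have h1 : (P.1 ∪ P.2) ∩ s = P.1 := by
      rw [Finset.union_inter_distrib_right, Finset.inter_eq_left.2 hP.1,
        Finset.disjoint_iff_inter_eq_empty.1 (hd.symm.mono_left hP.2), Finset.union_empty]
    have h2 : (P.1 ∪ P.2) ∩ t = P.2 := by
      rw [Finset.union_inter_distrib_right, Finset.inter_eq_left.2 hP.2,
        Finset.disjoint_iff_inter_eq_empty.1 (hd.mono_left hP.1), Finset.empty_union]
    simp [h1, h2]
  · intro E hE; rfl


lemma master_factorization {α ι : Type*} [DecidableEq α] (a b : α → ℝ)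
    (cond : ι → Finset α → Prop)
    (I : Finset ι) (t : ι → Finset α)
    (hdisj : ∀ i ∈ I, ∀ j ∈ I, i ≠ j → Disjoint (t i) (t j)) :
    ∑ E ∈ (I.biUnion t).powerset.filter (fun E => ∀ i ∈ I, cond i (E ∩ t i)),
        (∏ q ∈ E, a q) * ∏ q ∈ (I.biUnion t) \ E, b q
      = ∏ i ∈ I, ∑ F ∈ (t i).powerset.filter (cond i),
          (∏ q ∈ F, a q) * ∏ q ∈ t i \ F, b q := by
  classical
  induction I using Finset.induction_on with
  | empty => simp
  | @insert i₀ I' hi₀ ih =>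
    have hd : Disjoint (t i₀) (I'.biUnion t) := by
      rw [Finset.disjoint_biUnion_right]
      intro j hj
      exact hdisj i₀ (Finset.mem_insert_self _ _) j (Finset.mem_insert_of_mem hj)
        (fun h => hi₀ (h ▸ hj))
    have hU : (insert i₀ I').biUnion t = t i₀ ∪ I'.biUnion t := Finset.biUnion_insert ..
    rw [Finset.sum_filter, hU]
    set f : Finset α → ℝ := fun F => if cond i₀ F then (∏ q ∈ F, a q) * ∏ q ∈ t i₀ \ F, b q else 0 with hf
    set g : Finset α → ℝ := fun F => if ∀ i ∈ I', cond i (F ∩ t i) then (∏ q ∈ F, a q) * ∏ q ∈ (I'.biUnion t) \ F, b q else 0 with hg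
    have key : ∀ E ∈ (t i₀ ∪ I'.biUnion t).powerset,
        (if ∀ i ∈ insert i₀ I', cond i (E ∩ t i) then (∏ q ∈ E, a q) * ∏ q ∈ (t i₀ ∪ I'.biUnion t) \ E, b q else 0)
        = f (E ∩ t i₀) * g (E ∩ I'.biUnion t) := by
      intro E hE
      simp only [Finset.mem_powerset] at hE
      have hsplit : E = (E ∩ t i₀) ∪ (E ∩ I'.biUnion t) := by
        rw [← Finset.inter_union_distrib_left, Finset.inter_eq_left.2 hE]
      have hdE : Disjoint (E ∩ t i₀) (E ∩ I'.biUnion t) :=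
        hd.mono (Finset.inter_subset_right) (Finset.inter_subset_right)
      have hinter : ∀ i ∈ I', (E ∩ I'.biUnion t) ∩ t i = E ∩ t i := by
        intro i hi
        rw [Finset.inter_assoc, Finset.inter_eq_right.2 (Finset.subset_biUnion_of_mem t hi)]
      have hcond : (∀ i ∈ insert i₀ I', cond i (E ∩ t i))
          ↔ (cond i₀ (E ∩ t i₀) ∧ ∀ i ∈ I', cond i ((E ∩ I'.biUnion t) ∩ t i)) := by
        rw [Finset.forall_mem_insert]
        refine and_congr Iff.rfl ⟨fun h i hi => ?_, fun h i hi => ?_⟩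
        · rw [hinter i hi]; exact h i hi
        · rw [← hinter i hi]; exact h i hi
      have hprodA : (∏ q ∈ E, a q) = (∏ q ∈ E ∩ t i₀, a q) * ∏ q ∈ E ∩ I'.biUnion t, a q := by
        conv_lhs => rw [hsplit]
        exact Finset.prod_union hdE
      have hsdiff : (t i₀ ∪ I'.biUnion t) \ E = (t i₀ \ (E ∩ t i₀)) ∪ ((I'.biUnion t) \ (E ∩ I'.biUnion t)) := by
        ext q
        simp only [Finset.mem_sdiff, Finset.mem_union, Finset.mem_inter]
        tauto
      have hdS : Disjoint (t i₀ \ (E ∩ t i₀)) ((I'.biUnion t) \ (E ∩ I'.biUnion t)) :=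
        hd.mono (Finset.sdiff_subset) (Finset.sdiff_subset)
      have hprodB : (∏ q ∈ (t i₀ ∪ I'.biUnion t) \ E, b q)
          = (∏ q ∈ t i₀ \ (E ∩ t i₀), b q) * ∏ q ∈ (I'.biUnion t) \ (E ∩ I'.biUnion t), b q := by
        rw [hsdiff]; exact Finset.prod_union hdS
      have hfv : f (E ∩ t i₀) = if cond i₀ (E ∩ t i₀) then (∏ q ∈ E ∩ t i₀, a q) * ∏ q ∈ t i₀ \ (E ∩ t i₀), b q else 0 := rfl
      have hgv : g (E ∩ I'.biUnion t) = if ∀ i ∈ I', cond i ((E ∩ I'.biUnion t) ∩ t i) then (∏ q ∈ E ∩ I'.biUnion t, a q) * ∏ q ∈ (I'.biUnion t) \ (E ∩ I'.biUnion t), b q else 0 := rfl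
      rw [hfv, hgv]
      by_cases hc : ∀ i ∈ insert i₀ I', cond i (E ∩ t i)
      · rw [if_pos hc]
        rw [hcond] at hc
        rw [if_pos hc.1, if_pos hc.2, hprodA, hprodB]; ring
      · rw [if_neg hc]
        rw [hcond, not_and_or] at hc
        rcases hc with hc | hc
        · rw [if_neg hc, zero_mul]
        · rw [if_neg hc, mul_zero]
    rw [Finset.sum_congr rfl key, sum_powerset_union_mul _ _ hd f g]
    rw [Finset.prod_insert hi₀]
    congr 1
    · rw [Finset.sum_filter]
    · rw [← ih (fun i hi j hj hij => hdisj i (Finset.mem_insert_of_mem hi) j (Finset.mem_insert_of_mem hj) hij),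
        Finset.sum_filter]

set_option maxHeartbeats 1000000 in
lemma main_estimate {S : Type*} (he : Function.Injective e) (hm : 0 < m)
    (x : Fin n → S) (p : S → S → ℝ) (hpsym : ∀ r s, p r s = p s r)
    (hp0 : ∀ r s, 0 ≤ p r s) (hp1 : ∀ r s, p r s ≤ 1) :
    PConn m (fun j => x (e j)) p
        * ∏ v ∈ (rangeE e)ᶜ, (1 - ∏ j : Fin m, (1 - p (x v) (x (e j))))
      ≤ PConn n x p := by
  classical
  set out : Finset (Fin n) := (rangeE e)ᶜ with hout
  have houtv : ∀ v ∈ out, v ∉ rangeE e := fun v hv => Finset.mem_compl.1 hv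
  set I : Finset (Fin n ⊕ Bool) :=
    insert (Sum.inr false) (insert (Sum.inr true) (out.map ⟨Sum.inl, Sum.inl_injective⟩)) with hI
  have hmemI : ∀ i, i ∈ I ↔ (i = Sum.inr false ∨ i = Sum.inr true ∨ ∃ v ∈ out, i = Sum.inl v) := by
    intro i
    rw [hI, Finset.mem_insert, Finset.mem_insert, Finset.mem_map]
    refine or_congr Iff.rfl (or_congr Iff.rfl ?_)
    constructor
    · rintro ⟨v, hv, rfl⟩; exact ⟨v, hv, rfl⟩
    · rintro ⟨v, hv, rfl⟩; exact ⟨v, hv, rfl⟩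
  have hdisj : ∀ i ∈ I, ∀ j ∈ I, i ≠ j → Disjoint (tPart e i) (tPart e j) := by
    intro i hi j hj hij
    rcases (hmemI i).1 hi with rfl | rfl | ⟨v, hv, rfl⟩ <;>
      rcases (hmemI j).1 hj with rfl | rfl | ⟨w, hw, rfl⟩
    · exact absurd rfl hij
    · simpa using dAC e
    · simpa using dAB e w (houtv w hw)
    · simpa using (dAC e).symm
    · exact absurd rfl hij
    · simpa using dCB e w
    · simpa using (dAB e v (houtv v hv)).symm
    · simpa using (dCB e v).symm
    · exact dBB e (houtv v hv) (houtv w hw) (fun h => hij (congrArg Sum.inl h))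
  have hUnion : I.biUnion (tPart e) = upperPairs n := by
    apply subset_antisymm
    · refine Finset.biUnion_subset.2 fun i hi => ?_
      rcases (hmemI i).1 hi with rfl | rfl | ⟨v, hv, rfl⟩
      · exact Finset.filter_subset _ _
      · exact Finset.filter_subset _ _
      · exact Finset.filter_subset _ _
    · intro q hq
      rw [Finset.mem_biUnion]
      rcases parts_cover e hq with hA | hC | ⟨h1, hB⟩ | ⟨h2, hB⟩
      · exact ⟨Sum.inr false, (hmemI _).2 (Or.inl rfl), hA⟩
      · exact ⟨Sum.inr true, (hmemI _).2 (Or.inr (Or.inl rfl)), hC⟩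
      · exact ⟨Sum.inl q.1, (hmemI _).2 (Or.inr (Or.inr ⟨q.1, Finset.mem_compl.2 h1, rfl⟩)), hB⟩
      · exact ⟨Sum.inl q.2, (hmemI _).2 (Or.inr (Or.inr ⟨q.2, Finset.mem_compl.2 h2, rfl⟩)), hB⟩
  have hmaster := master_factorization (fun q => p (x q.1) (x q.2))
    (fun q => 1 - p (x q.1) (x q.2)) (cPart e) I (tPart e) hdisj
  rw [hUnion] at hmaster
  -- evaluate the right-hand side product
  have hf1 : (Sum.inr false : Fin n ⊕ Bool)
      ∉ insert (Sum.inr true) (out.map ⟨Sum.inl, Sum.inl_injective⟩) := by simp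
  have hf2 : (Sum.inr true : Fin n ⊕ Bool) ∉ out.map ⟨Sum.inl, Sum.inl_injective⟩ := by simp
  have hAv : ∑ F ∈ (tPart e (Sum.inr false)).powerset.filter (cPart e (Sum.inr false)),
        (∏ q ∈ F, p (x q.1) (x q.2)) * ∏ q ∈ tPart e (Sum.inr false) \ F, (1 - p (x q.1) (x q.2))
      = PConn m (fun j => x (e j)) p := by
    rw [tPart_inrf]
    rw [show cPart e (Sum.inr false) = fun F =>
      (SimpleGraph.fromRel fun i j : Fin m => phiMap e (i, j) ∈ F).Connected from rfl]
    have hs := sumA e he x p hpsym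
    rw [Finset.filter_congr_decidable] at hs
    rw [Finset.filter_congr_decidable]
    exact hs
  have hCv : ∑ F ∈ (tPart e (Sum.inr true)).powerset.filter (cPart e (Sum.inr true)),
        (∏ q ∈ F, p (x q.1) (x q.2)) * ∏ q ∈ tPart e (Sum.inr true) \ F, (1 - p (x q.1) (x q.2))
      = 1 := by
    rw [tPart_inrt, show cPart e (Sum.inr true) = fun _ => True from rfl, Finset.filter_true]
    exact sum_powerset_weight_one _ _
  have hBv : ∀ v ∈ out, ∑ F ∈ (tPart e (Sum.inl v)).powerset.filter (cPart e (Sum.inl v)),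
        (∏ q ∈ F, p (x q.1) (x q.2)) * ∏ q ∈ tPart e (Sum.inl v) \ F, (1 - p (x q.1) (x q.2))
      = 1 - ∏ j : Fin m, (1 - p (x v) (x (e j))) := by
    intro v hv
    rw [tPart_inl, show cPart e (Sum.inl v) = fun F => F.Nonempty from rfl]
    have hs := sumB e he x p hpsym v (houtv v hv)
    rw [Finset.filter_congr_decidable] at hs
    rw [Finset.filter_congr_decidable]
    exact hs
  have hprodI : ∏ i ∈ I, (∑ F ∈ (tPart e i).powerset.filter (cPart e i),
        (∏ q ∈ F, p (x q.1) (x q.2)) * ∏ q ∈ tPart e i \ F, (1 - p (x q.1) (x q.2)))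
      = PConn m (fun j => x (e j)) p
        * ∏ v ∈ out, (1 - ∏ j : Fin m, (1 - p (x v) (x (e j)))) := by
    rw [hI, Finset.prod_insert hf1, Finset.prod_insert hf2, Finset.prod_map, hAv, hCv, one_mul]
    congr 1
    refine Finset.prod_congr rfl fun v hv => ?_
    rw [show (⟨Sum.inl, Sum.inl_injective⟩ : Fin n ↪ (Fin n ⊕ Bool)) v = Sum.inl v from rfl]
    exact hBv v hv
  rw [← hprodI, ← hmaster, PConn]
  refine Finset.sum_le_sum_of_subset_of_nonneg ?_ ?_
  · intro E hE
    simp only [Finset.mem_filter] at hE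
    have hE1 := hE.1
    have hE2 := hE.2
    refine Finset.mem_filter.2 ⟨hE1, ?_⟩
    refine good_connected e he hm (Finset.mem_powerset.1 hE1) ?_ ?_
    · have := hE2 (Sum.inr false) ((hmemI _).2 (Or.inl rfl))
      rw [cPart_inrf, tPart_inrf] at this
      exact this
    · intro v hv
      have := hE2 (Sum.inl v) ((hmemI _).2 (Or.inr (Or.inr ⟨v, Finset.mem_compl.2 hv, rfl⟩)))
      rw [cPart_inl, tPart_inl] at this
      exact this
  · intro E _ _
    exact mul_nonneg (Finset.prod_nonneg fun q _ => hp0 _ _)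
      (Finset.prod_nonneg fun q _ => sub_nonneg.2 (hp1 _ _))


end GraphAux

-- ===================== end auxiliary lemmas =====================

set_option maxHeartbeats 1000000 in
/-- monotonicity estimate for connection probabilities. -/
theorem connProb_monotone_estimate
    {S : Type*} [Fintype S] [DecidableEq S] [Nonempty S]
    (N : ℕ) (hN : 1 ≤ N)
    (κN : S → S → ℝ) (hκNsym : ∀ r s, κN r s = κN s r)
    (hκN0 : ∀ r s, 0 ≤ κN r s) (hκNle : ∀ r s, κN r s ≤ N)
    (h' h : S → ℕ) (hne : h' ≠ 0) (hle : ∀ s, h' s ≤ h s) :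
    pN κN N h' *
        ∏ r : S, (1 - Real.exp (-(∑ s : S, κN r s * (h' s : ℝ)) / N)) ^ (h r - h' r)
      ≤ pN κN N h := by
  classical
  have hN0 : (0:ℝ) < (N:ℝ) := by exact_mod_cast hN
  have hp0 : ∀ r s : S, 0 ≤ min 1 (κN r s / (N:ℝ)) :=
    fun r s => le_min zero_le_one (div_nonneg (hκN0 r s) hN0.le)
  have hp1 : ∀ r s : S, min 1 (κN r s / (N:ℝ)) ≤ 1 := fun r s => min_le_left _ _
  have hpsym : ∀ r s : S, min 1 (κN r s / (N:ℝ)) = min 1 (κN s r / (N:ℝ)) :=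
    fun r s => by rw [hκNsym r s]
  have hm0 : 0 < ∑ s : S, h' s := by
    rcases Nat.eq_zero_or_pos (∑ s : S, h' s) with h0 | h0
    · exact absurd (funext fun s => Finset.sum_eq_zero_iff.1 h0 s (Finset.mem_univ s)) hne
    · exact h0
  obtain ⟨e, einj, hxe⟩ := exists_emb (compatVec h') (compatVec h)
    (fun s => by rw [card_fiber_compatVec, card_fiber_compatVec]; exact hle s)
  have hkey := main_estimate e einj hm0 (compatVec h) (fun r s => min 1 (κN r s / (N:ℝ)))
    hpsym hp0 hp1
  have hxcomp : (fun j => compatVec h (e j)) = compatVec h' := funext hxe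
  rw [hxcomp] at hkey
  -- nonnegativity of the smaller connection probability
  have hPC0 : 0 ≤ PConn (∑ s : S, h' s) (compatVec h') (fun r s => min 1 (κN r s / (N:ℝ))) := by
    unfold PConn
    refine Finset.sum_nonneg fun E _ => mul_nonneg (Finset.prod_nonneg fun q _ => hp0 _ _)
      (Finset.prod_nonneg fun q _ => sub_nonneg.2 (hp1 _ _))
  -- fiber cardinalities
  have hcardR : ∀ r : S, ((rangeE e).filter (fun v => compatVec h v = r)).card = h' r := by
    intro r
    have hmapim : rangeE e = Finset.univ.map ⟨e, einj⟩ := by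
      rw [Finset.map_eq_image]; rfl
    rw [hmapim, Finset.filter_map, Finset.card_map]
    have hfc : Finset.filter ((fun v => compatVec h v = r)
          ∘ ⇑(⟨e, einj⟩ : Fin (∑ s : S, h' s) ↪ Fin (∑ s : S, h s))) Finset.univ
        = Finset.filter (fun j => compatVec h' j = r) Finset.univ := by
      refine Finset.filter_congr fun j _ => ?_
      simp only [Function.comp, Function.Embedding.coeFn_mk, hxe j]
    rw [hfc]
    exact card_fiber_compatVec h' r
  have hcardout : ∀ r : S, (((rangeE e)ᶜ).filter (fun v => compatVec h v = r)).card
      = h r - h' r := by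
    intro r
    have hsplit : (h : S → ℕ) r = ((rangeE e).filter (fun v => compatVec h v = r)).card
        + (((rangeE e)ᶜ).filter (fun v => compatVec h v = r)).card := by
      rw [← Finset.card_union_of_disjoint
        (Finset.disjoint_filter_filter disjoint_compl_right), ← Finset.filter_union,
        Finset.union_compl]
      exact (card_fiber_compatVec h r).symm
    rw [hcardR r] at hsplit
    omega
  -- pointwise exponential bound
  have hplower : ∀ r s : S, 1 - min 1 (κN r s / (N:ℝ)) ≤ Real.exp (-(κN r s) / N) := by
    intro r s
    rcases le_or_gt (κN r s / (N:ℝ)) 1 with hc | hc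
    · rw [min_eq_right hc, neg_div]
      have := Real.add_one_le_exp (-(κN r s / (N:ℝ)))
      linarith
    · rw [min_eq_left hc.le, sub_self]
      exact Real.exp_nonneg _
  have harg : ∀ r : S, ∑ s' : S, ((h' s' : ℝ)) * (-(κN r s') / N)
      = -(∑ s' : S, κN r s' * (h' s' : ℝ)) / N := by
    intro r
    rw [neg_div, Finset.sum_div, ← Finset.sum_neg_distrib]
    exact Finset.sum_congr rfl fun s' _ => by ring
  have hboundv : ∀ v : Fin (∑ s : S, h s),
      ∏ j : Fin (∑ s : S, h' s), (1 - min 1 (κN (compatVec h v) (compatVec h (e j)) / (N:ℝ)))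
        ≤ Real.exp (-(∑ s : S, κN (compatVec h v) s * (h' s : ℝ)) / N) := by
    intro v
    calc ∏ j : Fin (∑ s : S, h' s), (1 - min 1 (κN (compatVec h v) (compatVec h (e j)) / (N:ℝ)))
        = ∏ j : Fin (∑ s : S, h' s), (1 - min 1 (κN (compatVec h v) (compatVec h' j) / (N:ℝ))) := by
          exact Finset.prod_congr rfl fun j _ => by rw [hxe j]
      _ = ∏ s : S, (1 - min 1 (κN (compatVec h v) s / (N:ℝ))) ^ (h' s) := by
          rw [prod_pow_fiber Finset.univ (compatVec h')
            (fun s => 1 - min 1 (κN (compatVec h v) s / (N:ℝ)))]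
          exact Finset.prod_congr rfl fun s _ => by rw [card_fiber_compatVec]
      _ ≤ ∏ s : S, (Real.exp (-(κN (compatVec h v) s) / N)) ^ (h' s) := by
          refine Finset.prod_le_prod (fun s _ => pow_nonneg (sub_nonneg.2 (hp1 _ _)) _)
            (fun s _ => pow_le_pow_left₀ (sub_nonneg.2 (hp1 _ _)) (hplower _ _) _)
      _ = Real.exp (∑ s : S, ((h' s : ℝ)) * (-(κN (compatVec h v) s) / N)) := by
          rw [Real.exp_sum]
          exact Finset.prod_congr rfl fun s _ => by rw [← Real.exp_nat_mul]
      _ = Real.exp (-(∑ s : S, κN (compatVec h v) s * (h' s : ℝ)) / N) := by rw [harg]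
  have hlow0 : ∀ r : S, 0 ≤ 1 - Real.exp (-(∑ s : S, κN r s * (h' s : ℝ)) / N) := by
    intro r
    refine sub_nonneg.2 (Real.exp_le_one_iff.2 ?_)
    apply div_nonpos_of_nonpos_of_nonneg _ hN0.le
    exact neg_nonpos.2 (Finset.sum_nonneg fun s _ =>
      mul_nonneg (hκN0 r s) (Nat.cast_nonneg _))
  -- the fiberwise rewriting of the product over types
  have hfib : ∏ r : S, (1 - Real.exp (-(∑ s : S, κN r s * (h' s : ℝ)) / N)) ^ (h r - h' r)
      = ∏ v ∈ (rangeE e)ᶜ, (1 - Real.exp (-(∑ s : S, κN (compatVec h v) s * (h' s : ℝ)) / N)) := by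
    rw [prod_pow_fiber ((rangeE e)ᶜ) (compatVec h)
      (fun r => 1 - Real.exp (-(∑ s : S, κN r s * (h' s : ℝ)) / N))]
    exact (Finset.prod_congr rfl fun r _ => by rw [hcardout r]).symm
  refine le_trans ?_ hkey
  have hpNh' : pN κN N h' = PConn (∑ s : S, h' s) (compatVec h')
      (fun r s => min 1 (κN r s / (N:ℝ))) := rfl
  rw [hpNh']
  refine mul_le_mul_of_nonneg_left ?_ hPC0
  rw [hfib]
  exact Finset.prod_le_prod (fun v _ => hlow0 _) (fun v _ => sub_le_sub_left (hboundv v) 1)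



end
end
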